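/- arXiv:1712.02130 — 3 statements merged into one kernel-verified Lean document; each statement's English description precedes it below -/
import Mathlib

section
/- Let N_{αβμν} (α,β,μ,ν∈{0,1,2}) be real coefficients satisfying the symmetry condition and the null condition. There exists a constant C>0, depending only on the coefficients, such that for every multi-index a, every sufficiently smooth (C^{|a|+4}) real-valued function u defined near a point (t,x)∈ℝ^{1+2} with t≥0 and |x|≥1, the quantity F₃(u) := Σ N_{αβμν} ∂_β Γ^a u · ∂_t Γ^a u · ∂_α∂_μ∂_ν u satisfies |F₃(u)(t,x)| ≤ C [ Σ_{i=1,2} |((ω_i∂_t+∂_i)Γ^a u)| · |∂_tΓ^a u| · |∂³u| + (1/|x|)·|∂_tΓ^a u|²·(|∂Γ²u| + |∂Γu| + |∂u|) ](t,x). -/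
noncomputable section

open MeasureTheory Real Set

/-- Partial derivative in coordinate direction `i` on space-time `ℝ³`
(coordinate `0` is time, coordinates `1, 2` are space). -/
def pd (i : Fin 3) (u : (Fin 3 → ℝ) → ℝ) : (Fin 3 → ℝ) → ℝ :=
  fun X => fderiv ℝ u X (Pi.single i 1)

/-- The d'Alembertian `□ = ∂_t² - ∂₁² - ∂₂²`. -/
def box (u : (Fin 3 → ℝ) → ℝ) : (Fin 3 → ℝ) → ℝ :=
  fun X => pd 0 (pd 0 u) X - pd 1 (pd 1 u) X - pd 2 (pd 2 u) X

/-- The seven Klainerman vector fields `Γ = (∂_t, ∂₁, ∂₂, Ω, L₁, L₂, S̃)`. -/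
def Gamma (i : Fin 7) (u : (Fin 3 → ℝ) → ℝ) : (Fin 3 → ℝ) → ℝ :=
  if i = 0 then pd 0 u
  else if i = 1 then pd 1 u
  else if i = 2 then pd 2 u
  else if i = 3 then fun X => -(X 2) * pd 1 u X + X 1 * pd 2 u X
  else if i = 4 then fun X => X 0 * pd 1 u X + X 1 * pd 0 u X
  else if i = 5 then fun X => X 0 * pd 2 u X + X 2 * pd 0 u X
  else fun X => X 0 * pd 0 u X + X 1 * pd 1 u X + X 2 * pd 2 u X - 2 * u X

/-- `Γ^a` for a multi-index `a = (a₁,…,a₇) ∈ ℕ⁷`. -/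
def GammaPow (a : Fin 7 → ℕ) (u : (Fin 3 → ℝ) → ℝ) : (Fin 3 → ℝ) → ℝ :=
  (Gamma 0)^[a 0] <| (Gamma 1)^[a 1] <| (Gamma 2)^[a 2] <| (Gamma 3)^[a 3] <|
    (Gamma 4)^[a 4] <| (Gamma 5)^[a 5] <| (Gamma 6)^[a 6] u

/-- The point `(t, x) ∈ ℝ^{1+2}`. -/
def pt (t : ℝ) (x : ℝ × ℝ) : Fin 3 → ℝ := ![t, x.1, x.2]

/-- `|∂v|²` at a point. -/
def pdSq (v : (Fin 3 → ℝ) → ℝ) (X : Fin 3 → ℝ) : ℝ :=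
  (pd 0 v X) ^ 2 + (pd 1 v X) ^ 2 + (pd 2 v X) ^ 2

/-- The spatial radius `r = |x|` of a space-time point. -/
def rad (X : Fin 3 → ℝ) : ℝ := Real.sqrt ((X 1) ^ 2 + (X 2) ^ 2)

/-- Multi-indices `a ∈ ℕ⁷` with `|a| ≤ k`. -/
def multiIndex7 (k : ℕ) : Finset (Fin 7 → ℕ) :=
  (Fintype.piFinset fun _ => Finset.range (k + 1)).filter fun a => ∑ i, a i ≤ k

/-- The generalized energy `E_k(u(t)) = (1/2) ∑_{|a| ≤ k-1} ∫ |∂Γ^a u|² dx`. -/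
def energy (k : ℕ) (u : (Fin 3 → ℝ) → ℝ) (t : ℝ) : ℝ :=
  (1 / 2) * ∑ a ∈ multiIndex7 (k - 1), ∫ x : ℝ × ℝ, pdSq (GammaPow a u) (pt t x)

/-- Partial derivatives on the plane `ℝ²`. -/
def pdx (i : Fin 2) (f : ℝ × ℝ → ℝ) : ℝ × ℝ → ℝ :=
  fun x => fderiv ℝ f x (if i = 0 then (1, 0) else (0, 1))

/-- The fields `Λ = (∂₁, ∂₂, r∂_r, Ω)` on `ℝ²`. -/
def Lam (i : Fin 4) (f : ℝ × ℝ → ℝ) : ℝ × ℝ → ℝ :=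
  if i = 0 then pdx 0 f
  else if i = 1 then pdx 1 f
  else if i = 2 then fun x => x.1 * pdx 0 f x + x.2 * pdx 1 f x
  else fun x => -x.2 * pdx 0 f x + x.1 * pdx 1 f x

/-- `Λ^a` for a multi-index `a ∈ ℕ⁴`. -/
def LamPow (a : Fin 4 → ℕ) (f : ℝ × ℝ → ℝ) : ℝ × ℝ → ℝ :=
  (Lam 0)^[a 0] <| (Lam 1)^[a 1] <| (Lam 2)^[a 2] <| (Lam 3)^[a 3] f

/-- Multi-indices `a ∈ ℕ⁴` with `|a| ≤ k`. -/
def multiIndex4 (k : ℕ) : Finset (Fin 4 → ℕ) :=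
  (Fintype.piFinset fun _ => Finset.range (k + 1)).filter fun a => ∑ i, a i ≤ k

/-- The `L²(ℝ²)` norm. -/
def L2 (f : ℝ × ℝ → ℝ) : ℝ := (eLpNorm f 2 volume).toReal

/-- `|∇f|` for a function on `ℝ²`. -/
def gradAbs (f : ℝ × ℝ → ℝ) : ℝ × ℝ → ℝ :=
  fun x => Real.sqrt ((pdx 0 f x) ^ 2 + (pdx 1 f x) ^ 2)

/-- Membership `(f, g) ∈ H^k_Λ`. -/
def MemHLam (k : ℕ) (f g : ℝ × ℝ → ℝ) : Prop :=
  ∀ a ∈ multiIndex4 (k - 1),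
    MemLp (LamPow a f) 2 (volume : Measure (ℝ × ℝ)) ∧
    MemLp (gradAbs (LamPow a f)) 2 (volume : Measure (ℝ × ℝ)) ∧
    MemLp (LamPow a g) 2 (volume : Measure (ℝ × ℝ))

/-- The norm `‖(f, g)‖_{H^k_Λ} = ∑_{|a| ≤ k-1} (‖∇Λ^a f‖_{L²} + ‖Λ^a g‖_{L²})`. -/
def HLamNorm (k : ℕ) (f g : ℝ × ℝ → ℝ) : ℝ :=
  ∑ a ∈ multiIndex4 (k - 1), (L2 (gradAbs (LamPow a f)) + L2 (LamPow a g))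

/-- The Japanese bracket `⟨t⟩ = √(1 + t²)`. -/
def jb (t : ℝ) : ℝ := Real.sqrt (1 + t ^ 2)

/-- The null condition for the coefficients `N_{αβμν}`. -/
def NullCond (N : Fin 3 → Fin 3 → Fin 3 → Fin 3 → ℝ) : Prop :=
  ∀ X : Fin 3 → ℝ, (X 0) ^ 2 = (X 1) ^ 2 + (X 2) ^ 2 →
    ∑ α : Fin 3, ∑ β : Fin 3, ∑ μ : Fin 3, ∑ ν : Fin 3,
      N α β μ ν * X α * X β * X μ * X ν = 0

/-- The symmetry condition `N_{αβμν} = N_{βαμν} = N_{αβνμ}`. -/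
def SymCond (N : Fin 3 → Fin 3 → Fin 3 → Fin 3 → ℝ) : Prop :=
  ∀ α β μ ν, N α β μ ν = N β α μ ν ∧ N α β μ ν = N α β ν μ

/-- The quadratic nonlinearity `N(u, v) = ∑ N_{αβμν} ∂_α∂_β u ∂_μ∂_ν v`. -/
def NL (N : Fin 3 → Fin 3 → Fin 3 → Fin 3 → ℝ) (u v : (Fin 3 → ℝ) → ℝ) :
    (Fin 3 → ℝ) → ℝ :=
  fun X => ∑ α : Fin 3, ∑ β : Fin 3, ∑ μ : Fin 3, ∑ ν : Fin 3,
    N α β μ ν * pd α (pd β u) X * pd μ (pd ν v) X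

/-- A global classical solution of `□u = N(u, u)` on `[0, ∞) × ℝ²` with data `(φ, ψ)`. -/
def IsGlobalSolution (N : Fin 3 → Fin 3 → Fin 3 → Fin 3 → ℝ)
    (φ ψ : ℝ × ℝ → ℝ) (u : (Fin 3 → ℝ) → ℝ) : Prop :=
  ContDiff ℝ 2 u ∧
  (∀ X : Fin 3 → ℝ, 0 ≤ X 0 → box u X = NL N u u X) ∧
  (∀ x : ℝ × ℝ, u (pt 0 x) = φ x ∧ pd 0 u (pt 0 x) = ψ x)

/-- The quadratic nonlinearity `∑ N_{μδ} ∂_μ v ∂_δ v` of the quasilinear equation. -/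
def QNL (N : Fin 3 → Fin 3 → ℝ) (v : (Fin 3 → ℝ) → ℝ) : (Fin 3 → ℝ) → ℝ :=
  fun X => ∑ μ : Fin 3, ∑ δ : Fin 3, N μ δ * pd μ v X * pd δ v X

/-- The null condition for the coefficients `N_{μδ}`. -/
def NullCond2 (N : Fin 3 → Fin 3 → ℝ) : Prop :=
  ∀ X : Fin 3 → ℝ, (X 0) ^ 2 = (X 1) ^ 2 + (X 2) ^ 2 →
    ∑ μ : Fin 3, ∑ δ : Fin 3, N μ δ * X μ * X δ = 0

/-- A global classical solution of `□v = ∑ A_l ∂_l (∑ N_{μδ} ∂_μ v ∂_δ v)` with data `(v₀, v₁)`. -/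
def IsGlobalQSolution (A : Fin 3 → ℝ) (N : Fin 3 → Fin 3 → ℝ)
    (v₀ v₁ : ℝ × ℝ → ℝ) (v : (Fin 3 → ℝ) → ℝ) : Prop :=
  ContDiff ℝ 2 v ∧
  (∀ X : Fin 3 → ℝ, 0 ≤ X 0 → box v X = ∑ l : Fin 3, A l * pd l (QNL N v) X) ∧
  (∀ x : ℝ × ℝ, v (pt 0 x) = v₀ x ∧ pd 0 v (pt 0 x) = v₁ x)


/-- `|∂v|` at a point. -/
def absPd (v : (Fin 3 → ℝ) → ℝ) (X : Fin 3 → ℝ) : ℝ := Real.sqrt (pdSq v X)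

/-- `|∂Γu|` at a point: the sum over the seven fields `Γ'` of `|∂Γ'u|`. -/
def absPdGam (u : (Fin 3 → ℝ) → ℝ) (X : Fin 3 → ℝ) : ℝ :=
  ∑ i : Fin 7, absPd (Gamma i u) X

/-- `|∂Γ²u|` at a point: the sum over pairs of fields `Γ', Γ''` of `|∂Γ'Γ''u|`. -/
def absPdGam2 (u : (Fin 3 → ℝ) → ℝ) (X : Fin 3 → ℝ) : ℝ :=
  ∑ i : Fin 7, ∑ j : Fin 7, absPd (Gamma i (Gamma j u)) X

/-- `|∂³u|` at a point: the Euclidean norm of all third-order space-time derivatives. -/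
def absPd3 (u : (Fin 3 → ℝ) → ℝ) (X : Fin 3 → ℝ) : ℝ :=
  Real.sqrt (∑ i : Fin 3, ∑ j : Fin 3, ∑ l : Fin 3, (pd i (pd j (pd l u)) X) ^ 2)

/-! ### Auxiliary lemmas for `F3_pointwise_bound` -/

section F3Aux

-- basic `pd` calculus
private def projL (k : Fin 3) : (Fin 3 → ℝ) →L[ℝ] ℝ :=
  ContinuousLinearMap.proj (R := ℝ) (φ := fun _ : Fin 3 => ℝ) k

private lemma coord_hasFDerivAt (k : Fin 3) (X : Fin 3 → ℝ) :
    HasFDerivAt (fun Y : Fin 3 → ℝ => Y k) (projL k) X :=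
  (projL k).hasFDerivAt

private lemma pd_coord_mul (i k : Fin 3) {f : (Fin 3 → ℝ) → ℝ} {X : Fin 3 → ℝ}
    (hf : DifferentiableAt ℝ f X) :
    pd i (fun Y => Y k * f Y) X = (if k = i then 1 else 0) * f X + X k * pd i f X := by
  have h := ((coord_hasFDerivAt k X).fun_mul hf.hasFDerivAt).fderiv
  simp only [pd, h]
  simp [projL, ContinuousLinearMap.proj, Pi.single_apply, mul_comm]
  ring

private lemma pd_fderiv_fderiv {z : (Fin 3 → ℝ) → ℝ} {X : Fin 3 → ℝ}
    (hz : DifferentiableAt ℝ (fderiv ℝ z) X) (i j : Fin 3) :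
    pd i (pd j z) X = fderiv ℝ (fderiv ℝ z) X (Pi.single i 1) (Pi.single j 1) := by
  have h : fderiv ℝ (fun Y => fderiv ℝ z Y (Pi.single j 1)) X =
      (fderiv ℝ z X).comp (fderiv ℝ (fun _ : Fin 3 → ℝ => (Pi.single j 1 : Fin 3 → ℝ)) X)
        + (fderiv ℝ (fderiv ℝ z) X).flip (Pi.single j 1) :=
    fderiv_clm_apply hz (differentiableAt_const _)
  have hpd : pd j z = fun Y => fderiv ℝ z Y (Pi.single j 1) := rfl
  simp only [pd, hpd, h, fderiv_const_apply, Pi.zero_apply, ContinuousLinearMap.comp_zero,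
    ContinuousLinearMap.zero_apply, zero_add, ContinuousLinearMap.add_apply,
    ContinuousLinearMap.flip_apply]

private lemma pd_comm {z : (Fin 3 → ℝ) → ℝ} {X : Fin 3 → ℝ}
    (hz : ContDiffAt ℝ 2 z X) (i j : Fin 3) :
    pd i (pd j z) X = pd j (pd i z) X := by
  have hd : DifferentiableAt ℝ (fderiv ℝ z) X :=
    (hz.fderiv_right (m := 1) le_rfl).differentiableAt one_ne_zero
  rw [pd_fderiv_fderiv hd, pd_fderiv_fderiv hd]
  exact hz.isSymmSndFDerivAt (by norm_num) _ _

private lemma pd_contDiffAt {n m : WithTop ℕ∞} {z : (Fin 3 → ℝ) → ℝ} {X : Fin 3 → ℝ} (i : Fin 3)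
    (hz : ContDiffAt ℝ n z X) (hmn : m + 1 ≤ n) : ContDiffAt ℝ m (pd i z) X :=
  (hz.fderiv_right hmn).clm_apply contDiffAt_const

private lemma pd_diffAt {z : (Fin 3 → ℝ) → ℝ} {X : Fin 3 → ℝ} (i : Fin 3)
    (hz : ContDiffAt ℝ 2 z X) : DifferentiableAt ℝ (pd i z) X :=
  (pd_contDiffAt (m := 1) i hz (by norm_num)).differentiableAt one_ne_zero

private lemma pd_add (i : Fin 3) {f g : (Fin 3 → ℝ) → ℝ} {X : Fin 3 → ℝ}
    (hf : DifferentiableAt ℝ f X) (hg : DifferentiableAt ℝ g X) :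
    pd i (fun Y => f Y + g Y) X = pd i f X + pd i g X := by
  simp only [pd, fderiv_fun_add hf hg, ContinuousLinearMap.add_apply]

private lemma pd_sub (i : Fin 3) {f g : (Fin 3 → ℝ) → ℝ} {X : Fin 3 → ℝ}
    (hf : DifferentiableAt ℝ f X) (hg : DifferentiableAt ℝ g X) :
    pd i (fun Y => f Y - g Y) X = pd i f X - pd i g X := by
  simp only [pd, fderiv_fun_sub hf hg, ContinuousLinearMap.sub_apply]

private lemma pd_const_mul (i : Fin 3) (c : ℝ) {f : (Fin 3 → ℝ) → ℝ} {X : Fin 3 → ℝ}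
    (hf : DifferentiableAt ℝ f X) :
    pd i (fun Y => c * f Y) X = c * pd i f X := by
  simp only [pd, fderiv_const_mul hf, ContinuousLinearMap.smul_apply, smul_eq_mul]

private lemma pd_neg_coord_mul (i k : Fin 3) {f : (Fin 3 → ℝ) → ℝ} {X : Fin 3 → ℝ}
    (hf : DifferentiableAt ℝ f X) :
    pd i (fun Y => -(Y k) * f Y) X = -((if k = i then 1 else 0) * f X + X k * pd i f X) := by
  have h : (fun Y : Fin 3 → ℝ => -(Y k) * f Y) = fun Y => (-1 : ℝ) * (Y k * f Y) := by
    funext Y; ring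
  rw [h, pd_const_mul i (-1) (f := fun Y => Y k * f Y) (((coord_hasFDerivAt k X).differentiableAt).mul hf),
    pd_coord_mul i k hf]
  ring

-- abs helpers
private lemma abs_pd_le_absPd {z : (Fin 3 → ℝ) → ℝ} {X : Fin 3 → ℝ} (i : Fin 3) :
    |pd i z X| ≤ absPd z X := by
  rw [absPd, ← Real.sqrt_sq_eq_abs]
  apply Real.sqrt_le_sqrt
  have h0 := sq_nonneg (pd 0 z X); have h1 := sq_nonneg (pd 1 z X); have h2 := sq_nonneg (pd 2 z X)
  fin_cases i
  · show (pd 0 z X)^2 ≤ pdSq z X; unfold pdSq; linarith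
  · show (pd 1 z X)^2 ≤ pdSq z X; unfold pdSq; linarith
  · show (pd 2 z X)^2 ≤ pdSq z X; unfold pdSq; linarith

private lemma absPd_nonneg (z : (Fin 3 → ℝ) → ℝ) (X : Fin 3 → ℝ) : 0 ≤ absPd z X :=
  Real.sqrt_nonneg _

private lemma abs_ite_mul (c : Prop) [Decidable c] (x : ℝ) :
    |(if c then (1:ℝ) else 0) * x| ≤ |x| := by
  split_ifs <;> simp [abs_nonneg]

/-- Commutator bound: `|Γ_j ∂_μ z| ≤ |∂ Γ_j z| + 3 |∂z|`. -/
private lemma gamma_pd_comm_bound {z : (Fin 3 → ℝ) → ℝ} {X : Fin 3 → ℝ}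
    (hz : ContDiffAt ℝ 2 z X) (j : Fin 7) (μ : Fin 3) :
    |Gamma j (pd μ z) X| ≤ absPd (Gamma j z) X + 3 * absPd z X := by
  have hd : ∀ l : Fin 3, DifferentiableAt ℝ (pd l z) X := fun l => pd_diffAt l hz
  have hdz : DifferentiableAt ℝ z X := hz.differentiableAt two_ne_zero
  have hco : ∀ k l : Fin 3, DifferentiableAt ℝ (fun Y : Fin 3 → ℝ => Y k * pd l z Y) X :=
    fun k l => ((coord_hasFDerivAt k X).differentiableAt).mul (hd l)
  have hcomm : ∀ k l : Fin 3, pd k (pd l z) X = pd l (pd k z) X := pd_comm hz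
  have habs := fun i => abs_pd_le_absPd (z := z) (X := X) i
  have hnn := absPd_nonneg z X
  fin_cases j
  · -- j = 0
    show |Gamma 0 (pd μ z) X| ≤ absPd (Gamma 0 z) X + 3 * absPd z X
    have : Gamma 0 (pd μ z) X = pd μ (Gamma 0 z) X := hcomm 0 μ
    rw [this]
    have := abs_pd_le_absPd (z := Gamma 0 z) (X := X) μ
    linarith
  · show |Gamma 1 (pd μ z) X| ≤ absPd (Gamma 1 z) X + 3 * absPd z X
    have : Gamma 1 (pd μ z) X = pd μ (Gamma 1 z) X := hcomm 1 μ
    rw [this]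
    have := abs_pd_le_absPd (z := Gamma 1 z) (X := X) μ
    linarith
  · show |Gamma 2 (pd μ z) X| ≤ absPd (Gamma 2 z) X + 3 * absPd z X
    have : Gamma 2 (pd μ z) X = pd μ (Gamma 2 z) X := hcomm 2 μ
    rw [this]
    have := abs_pd_le_absPd (z := Gamma 2 z) (X := X) μ
    linarith
  · -- j = 3
    show |Gamma 3 (pd μ z) X| ≤ absPd (Gamma 3 z) X + 3 * absPd z X
    have h1 : pd μ (Gamma 3 z) X =
        -((if (2:Fin 3) = μ then (1:ℝ) else 0) * pd 1 z X + X 2 * pd μ (pd 1 z) X)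
          + ((if (1:Fin 3) = μ then (1:ℝ) else 0) * pd 2 z X + X 1 * pd μ (pd 2 z) X) := by
      have : Gamma 3 z = fun Y => (fun Y : Fin 3 → ℝ => -(Y 2) * pd 1 z Y) Y
          + (fun Y : Fin 3 → ℝ => Y 1 * pd 2 z Y) Y := rfl
      have hneg : DifferentiableAt ℝ (fun Y : Fin 3 → ℝ => -(Y 2) * pd 1 z Y) X := by
        simpa [neg_mul] using (hco 2 1).neg
      rw [this, pd_add μ hneg (hco 1 2), pd_neg_coord_mul μ 2 (hd 1),
        pd_coord_mul μ 1 (hd 2)]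
    have h2 : Gamma 3 (pd μ z) X = -(X 2) * pd 1 (pd μ z) X + X 1 * pd 2 (pd μ z) X := rfl
    have h3 : Gamma 3 (pd μ z) X = pd μ (Gamma 3 z) X
        + (if (2:Fin 3) = μ then (1:ℝ) else 0) * pd 1 z X
        - (if (1:Fin 3) = μ then (1:ℝ) else 0) * pd 2 z X := by
      rw [h2, h1, ← hcomm μ 1, ← hcomm μ 2]; ring
    rw [h3]
    have b1 := abs_pd_le_absPd (z := Gamma 3 z) (X := X) μ
    have b2 := abs_ite_mul ((2:Fin 3) = μ) (pd 1 z X)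
    have b3 := abs_ite_mul ((1:Fin 3) = μ) (pd 2 z X)
    calc |pd μ (Gamma 3 z) X + (if (2:Fin 3) = μ then (1:ℝ) else 0) * pd 1 z X
        - (if (1:Fin 3) = μ then (1:ℝ) else 0) * pd 2 z X|
        ≤ |pd μ (Gamma 3 z) X| + |(if (2:Fin 3) = μ then (1:ℝ) else 0) * pd 1 z X|
          + |(if (1:Fin 3) = μ then (1:ℝ) else 0) * pd 2 z X| := by
            exact (abs_sub _ _).trans (by gcongr; exact abs_add_le _ _)
      _ ≤ absPd (Gamma 3 z) X + 3 * absPd z X := by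
            have := habs 1; have := habs 2; linarith
  · -- j = 4
    show |Gamma 4 (pd μ z) X| ≤ absPd (Gamma 4 z) X + 3 * absPd z X
    have h1 : pd μ (Gamma 4 z) X =
        ((if (0:Fin 3) = μ then (1:ℝ) else 0) * pd 1 z X + X 0 * pd μ (pd 1 z) X)
          + ((if (1:Fin 3) = μ then (1:ℝ) else 0) * pd 0 z X + X 1 * pd μ (pd 0 z) X) := by
      have : Gamma 4 z = fun Y => (fun Y : Fin 3 → ℝ => Y 0 * pd 1 z Y) Y
          + (fun Y : Fin 3 → ℝ => Y 1 * pd 0 z Y) Y := rfl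
      rw [this, pd_add μ (hco 0 1) (hco 1 0), pd_coord_mul μ 0 (hd 1), pd_coord_mul μ 1 (hd 0)]
    have h3 : Gamma 4 (pd μ z) X = pd μ (Gamma 4 z) X
        - (if (0:Fin 3) = μ then (1:ℝ) else 0) * pd 1 z X
        - (if (1:Fin 3) = μ then (1:ℝ) else 0) * pd 0 z X := by
      have h2 : Gamma 4 (pd μ z) X = X 0 * pd 1 (pd μ z) X + X 1 * pd 0 (pd μ z) X := rfl
      rw [h2, h1, ← hcomm μ 1, ← hcomm μ 0]; ring
    rw [h3]
    have b1 := abs_pd_le_absPd (z := Gamma 4 z) (X := X) μ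
    have b2 := abs_ite_mul ((0:Fin 3) = μ) (pd 1 z X)
    have b3 := abs_ite_mul ((1:Fin 3) = μ) (pd 0 z X)
    calc |pd μ (Gamma 4 z) X - (if (0:Fin 3) = μ then (1:ℝ) else 0) * pd 1 z X
        - (if (1:Fin 3) = μ then (1:ℝ) else 0) * pd 0 z X|
        ≤ |pd μ (Gamma 4 z) X| + |(if (0:Fin 3) = μ then (1:ℝ) else 0) * pd 1 z X|
          + |(if (1:Fin 3) = μ then (1:ℝ) else 0) * pd 0 z X| := by
            exact (abs_sub _ _).trans (by gcongr; exact (abs_sub _ _))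
      _ ≤ absPd (Gamma 4 z) X + 3 * absPd z X := by
            have := habs 0; have := habs 1; linarith
  · -- j = 5
    show |Gamma 5 (pd μ z) X| ≤ absPd (Gamma 5 z) X + 3 * absPd z X
    have h1 : pd μ (Gamma 5 z) X =
        ((if (0:Fin 3) = μ then (1:ℝ) else 0) * pd 2 z X + X 0 * pd μ (pd 2 z) X)
          + ((if (2:Fin 3) = μ then (1:ℝ) else 0) * pd 0 z X + X 2 * pd μ (pd 0 z) X) := by
      have : Gamma 5 z = fun Y => (fun Y : Fin 3 → ℝ => Y 0 * pd 2 z Y) Y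
          + (fun Y : Fin 3 → ℝ => Y 2 * pd 0 z Y) Y := rfl
      rw [this, pd_add μ (hco 0 2) (hco 2 0), pd_coord_mul μ 0 (hd 2), pd_coord_mul μ 2 (hd 0)]
    have h3 : Gamma 5 (pd μ z) X = pd μ (Gamma 5 z) X
        - (if (0:Fin 3) = μ then (1:ℝ) else 0) * pd 2 z X
        - (if (2:Fin 3) = μ then (1:ℝ) else 0) * pd 0 z X := by
      have h2 : Gamma 5 (pd μ z) X = X 0 * pd 2 (pd μ z) X + X 2 * pd 0 (pd μ z) X := rfl
      rw [h2, h1, ← hcomm μ 2, ← hcomm μ 0]; ring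
    rw [h3]
    have b1 := abs_pd_le_absPd (z := Gamma 5 z) (X := X) μ
    have b2 := abs_ite_mul ((0:Fin 3) = μ) (pd 2 z X)
    have b3 := abs_ite_mul ((2:Fin 3) = μ) (pd 0 z X)
    calc |pd μ (Gamma 5 z) X - (if (0:Fin 3) = μ then (1:ℝ) else 0) * pd 2 z X
        - (if (2:Fin 3) = μ then (1:ℝ) else 0) * pd 0 z X|
        ≤ |pd μ (Gamma 5 z) X| + |(if (0:Fin 3) = μ then (1:ℝ) else 0) * pd 2 z X|
          + |(if (2:Fin 3) = μ then (1:ℝ) else 0) * pd 0 z X| := by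
            exact (abs_sub _ _).trans (by gcongr; exact (abs_sub _ _))
      _ ≤ absPd (Gamma 5 z) X + 3 * absPd z X := by
            have := habs 0; have := habs 2; linarith
  · -- j = 6
    show |Gamma 6 (pd μ z) X| ≤ absPd (Gamma 6 z) X + 3 * absPd z X
    have h1 : pd μ (Gamma 6 z) X =
        ((if (0:Fin 3) = μ then (1:ℝ) else 0) * pd 0 z X + X 0 * pd μ (pd 0 z) X)
          + ((if (1:Fin 3) = μ then (1:ℝ) else 0) * pd 1 z X + X 1 * pd μ (pd 1 z) X)
          + ((if (2:Fin 3) = μ then (1:ℝ) else 0) * pd 2 z X + X 2 * pd μ (pd 2 z) X)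
          - 2 * pd μ z X := by
      have : Gamma 6 z = fun Y => ((fun Y : Fin 3 → ℝ => (fun Y : Fin 3 → ℝ => Y 0 * pd 0 z Y) Y
          + (fun Y : Fin 3 → ℝ => Y 1 * pd 1 z Y) Y) Y
          + (fun Y : Fin 3 → ℝ => Y 2 * pd 2 z Y) Y)
          - (fun Y : Fin 3 → ℝ => 2 * z Y) Y := rfl
      rw [this, pd_sub μ (((hco 0 0).fun_add (hco 1 1)).fun_add (hco 2 2)) (hdz.const_mul 2),
        pd_add μ ((hco 0 0).fun_add (hco 1 1)) (hco 2 2), pd_add μ (hco 0 0) (hco 1 1),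
        pd_coord_mul μ 0 (hd 0), pd_coord_mul μ 1 (hd 1), pd_coord_mul μ 2 (hd 2),
        pd_const_mul μ 2 hdz]
    have h3 : Gamma 6 (pd μ z) X = pd μ (Gamma 6 z) X
        - (if (0:Fin 3) = μ then (1:ℝ) else 0) * pd 0 z X
        - (if (1:Fin 3) = μ then (1:ℝ) else 0) * pd 1 z X
        - (if (2:Fin 3) = μ then (1:ℝ) else 0) * pd 2 z X := by
      have h2 : Gamma 6 (pd μ z) X = X 0 * pd 0 (pd μ z) X + X 1 * pd 1 (pd μ z) X
          + X 2 * pd 2 (pd μ z) X - 2 * pd μ z X := rfl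
      rw [h2, h1, ← hcomm μ 0, ← hcomm μ 1, ← hcomm μ 2]; ring
    rw [h3]
    have b1 := abs_pd_le_absPd (z := Gamma 6 z) (X := X) μ
    have b2 := abs_ite_mul ((0:Fin 3) = μ) (pd 0 z X)
    have b3 := abs_ite_mul ((1:Fin 3) = μ) (pd 1 z X)
    have b4 := abs_ite_mul ((2:Fin 3) = μ) (pd 2 z X)
    calc |pd μ (Gamma 6 z) X - (if (0:Fin 3) = μ then (1:ℝ) else 0) * pd 0 z X
        - (if (1:Fin 3) = μ then (1:ℝ) else 0) * pd 1 z X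
        - (if (2:Fin 3) = μ then (1:ℝ) else 0) * pd 2 z X|
        ≤ |pd μ (Gamma 6 z) X| + |(if (0:Fin 3) = μ then (1:ℝ) else 0) * pd 0 z X|
          + |(if (1:Fin 3) = μ then (1:ℝ) else 0) * pd 1 z X|
          + |(if (2:Fin 3) = μ then (1:ℝ) else 0) * pd 2 z X| := by
            exact (abs_sub _ _).trans
              (by gcongr; exact (abs_sub _ _).trans (by gcongr; exact (abs_sub _ _)))
      _ ≤ absPd (Gamma 6 z) X + 3 * absPd z X := by
            have := habs 0; have := habs 1; have := habs 2; linarith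

end F3Aux
section F3Aux2

/-- The good-derivative algebraic identity bound. -/
private lemma good_deriv_bound {X : Fin 3 → ℝ} (w : (Fin 3 → ℝ) → ℝ)
    (ht : 0 ≤ X 0) (hr : 1 ≤ rad X) (α : Fin 3) :
    |pd α w X - (![1, -(X 1 / rad X), -(X 2 / rad X)] : Fin 3 → ℝ) α * pd 0 w X|
      ≤ (1 / rad X) * (|Gamma 3 w X| + |Gamma 4 w X| + |Gamma 5 w X| + |Gamma 6 w X|
          + 2 * |w X|) := by
  set r := rad X with hrdef
  have hr0 : (0:ℝ) < r := lt_of_lt_of_le one_pos hr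
  have hr2 : r ^ 2 = (X 1) ^ 2 + (X 2) ^ 2 := Real.sq_sqrt (by positivity)
  have hX1 : |X 1| ≤ r := by
    rw [← Real.sqrt_sq_eq_abs]; exact Real.sqrt_le_sqrt (by nlinarith [sq_nonneg (X 2)])
  have hX2 : |X 2| ≤ r := by
    rw [← Real.sqrt_sq_eq_abs]; exact Real.sqrt_le_sqrt (by nlinarith [sq_nonneg (X 1)])
  have e3 : Gamma 3 w X = -(X 2) * pd 1 w X + X 1 * pd 2 w X := rfl
  have e4 : Gamma 4 w X = X 0 * pd 1 w X + X 1 * pd 0 w X := rfl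
  have e5 : Gamma 5 w X = X 0 * pd 2 w X + X 2 * pd 0 w X := rfl
  have e6 : Gamma 6 w X = X 0 * pd 0 w X + X 1 * pd 1 w X + X 2 * pd 2 w X - 2 * w X := rfl
  have hnn : (0:ℝ) ≤ |Gamma 3 w X| + |Gamma 4 w X| + |Gamma 5 w X| + |Gamma 6 w X| + 2 * |w X| :=
    by positivity
  fin_cases α
  · -- α = 0
    show |pd 0 w X - (![1, -(X 1 / r), -(X 2 / r)] : Fin 3 → ℝ) 0 * pd 0 w X| ≤ _
    simp only [Matrix.cons_val_zero, one_mul, sub_self, abs_zero]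
    positivity
  · -- α = 1
    show |pd 1 w X - (![1, -(X 1 / r), -(X 2 / r)] : Fin 3 → ℝ) 1 * pd 0 w X| ≤ _
    have hda : (![1, -(X 1 / r), -(X 2 / r)] : Fin 3 → ℝ) 1 = -(X 1 / r) := rfl
    rw [hda]
    have key : (X 0 + r) * (r * pd 1 w X + X 1 * pd 0 w X)
        = X 1 * (Gamma 6 w X + 2 * w X) + r * Gamma 4 w X - X 2 * Gamma 3 w X := by
      rw [e3, e4, e6]; linear_combination pd 1 w X * hr2
    have hb : |X 1 * (Gamma 6 w X + 2 * w X) + r * Gamma 4 w X - X 2 * Gamma 3 w X|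
        ≤ r * (|Gamma 3 w X| + |Gamma 4 w X| + |Gamma 6 w X| + 2 * |w X|) := by
      have t1 : |X 1 * (Gamma 6 w X + 2 * w X)| ≤ r * (|Gamma 6 w X| + 2 * |w X|) := by
        rw [abs_mul]
        apply mul_le_mul hX1 _ (abs_nonneg _) (le_of_lt hr0)
        calc |Gamma 6 w X + 2 * w X| ≤ |Gamma 6 w X| + |2 * w X| := abs_add_le _ _
          _ = |Gamma 6 w X| + 2 * |w X| := by rw [abs_mul, abs_two]
      have t2 : |r * Gamma 4 w X| = r * |Gamma 4 w X| := by
        rw [abs_mul, abs_of_pos hr0]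
      have t3 : |X 2 * Gamma 3 w X| ≤ r * |Gamma 3 w X| := by
        rw [abs_mul]; exact mul_le_mul_of_nonneg_right hX2 (abs_nonneg _)
      calc |X 1 * (Gamma 6 w X + 2 * w X) + r * Gamma 4 w X - X 2 * Gamma 3 w X|
          ≤ |X 1 * (Gamma 6 w X + 2 * w X) + r * Gamma 4 w X| + |X 2 * Gamma 3 w X| :=
            abs_sub _ _
        _ ≤ |X 1 * (Gamma 6 w X + 2 * w X)| + |r * Gamma 4 w X| + |X 2 * Gamma 3 w X| := by
            have := abs_add_le (X 1 * (Gamma 6 w X + 2 * w X)) (r * Gamma 4 w X); linarith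
        _ ≤ r * (|Gamma 3 w X| + |Gamma 4 w X| + |Gamma 6 w X| + 2 * |w X|) := by
            rw [t2] at *; linarith
    have hA : |r * pd 1 w X + X 1 * pd 0 w X|
        ≤ |Gamma 3 w X| + |Gamma 4 w X| + |Gamma 6 w X| + 2 * |w X| := by
      have h1 : |r * pd 1 w X + X 1 * pd 0 w X| * (X 0 + r)
          = |X 1 * (Gamma 6 w X + 2 * w X) + r * Gamma 4 w X - X 2 * Gamma 3 w X| := by
        rw [← abs_of_pos (show (0:ℝ) < X 0 + r by linarith), ← abs_mul, mul_comm, key]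
      have h2 : |r * pd 1 w X + X 1 * pd 0 w X| * r
          ≤ |r * pd 1 w X + X 1 * pd 0 w X| * (X 0 + r) :=
        mul_le_mul_of_nonneg_left (by linarith) (abs_nonneg _)
      have h3 := hb
      rw [← h1] at h3
      have := le_trans h2 h3
      calc |r * pd 1 w X + X 1 * pd 0 w X|
          = |r * pd 1 w X + X 1 * pd 0 w X| * r / r := by field_simp
        _ ≤ r * (|Gamma 3 w X| + |Gamma 4 w X| + |Gamma 6 w X| + 2 * |w X|) / r := by
            apply div_le_div_of_nonneg_right ?_ hr0.le
            · linarith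
        _ = |Gamma 3 w X| + |Gamma 4 w X| + |Gamma 6 w X| + 2 * |w X| := by field_simp
    have hgood : pd 1 w X - -(X 1 / r) * pd 0 w X = (r * pd 1 w X + X 1 * pd 0 w X) / r := by
      field_simp; ring
    rw [hgood, abs_div, abs_of_pos hr0, div_le_iff₀ hr0]
    have hmm : 1 / r * (|Gamma 3 w X| + |Gamma 4 w X| + |Gamma 5 w X| + |Gamma 6 w X| + 2 * |w X|) * r
        = |Gamma 3 w X| + |Gamma 4 w X| + |Gamma 5 w X| + |Gamma 6 w X| + 2 * |w X| := by
      field_simp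
    rw [hmm]
    have := abs_nonneg (Gamma 5 w X); linarith
  · -- α = 2
    show |pd 2 w X - (![1, -(X 1 / r), -(X 2 / r)] : Fin 3 → ℝ) 2 * pd 0 w X| ≤ _
    have hda : (![1, -(X 1 / r), -(X 2 / r)] : Fin 3 → ℝ) 2 = -(X 2 / r) := rfl
    rw [hda]
    have key : (X 0 + r) * (r * pd 2 w X + X 2 * pd 0 w X)
        = X 2 * (Gamma 6 w X + 2 * w X) + r * Gamma 5 w X + X 1 * Gamma 3 w X := by
      rw [e3, e5, e6]; linear_combination pd 2 w X * hr2
    have hb : |X 2 * (Gamma 6 w X + 2 * w X) + r * Gamma 5 w X + X 1 * Gamma 3 w X|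
        ≤ r * (|Gamma 3 w X| + |Gamma 5 w X| + |Gamma 6 w X| + 2 * |w X|) := by
      have t1 : |X 2 * (Gamma 6 w X + 2 * w X)| ≤ r * (|Gamma 6 w X| + 2 * |w X|) := by
        rw [abs_mul]
        apply mul_le_mul hX2 _ (abs_nonneg _) (le_of_lt hr0)
        calc |Gamma 6 w X + 2 * w X| ≤ |Gamma 6 w X| + |2 * w X| := abs_add_le _ _
          _ = |Gamma 6 w X| + 2 * |w X| := by rw [abs_mul, abs_two]
      have t2 : |r * Gamma 5 w X| = r * |Gamma 5 w X| := by
        rw [abs_mul, abs_of_pos hr0]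
      have t3 : |X 1 * Gamma 3 w X| ≤ r * |Gamma 3 w X| := by
        rw [abs_mul]; exact mul_le_mul_of_nonneg_right hX1 (abs_nonneg _)
      calc |X 2 * (Gamma 6 w X + 2 * w X) + r * Gamma 5 w X + X 1 * Gamma 3 w X|
          ≤ |X 2 * (Gamma 6 w X + 2 * w X) + r * Gamma 5 w X| + |X 1 * Gamma 3 w X| :=
            abs_add_le _ _
        _ ≤ |X 2 * (Gamma 6 w X + 2 * w X)| + |r * Gamma 5 w X| + |X 1 * Gamma 3 w X| := by
            have := abs_add_le (X 2 * (Gamma 6 w X + 2 * w X)) (r * Gamma 5 w X); linarith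
        _ ≤ r * (|Gamma 3 w X| + |Gamma 5 w X| + |Gamma 6 w X| + 2 * |w X|) := by
            rw [t2] at *; linarith
    have hA : |r * pd 2 w X + X 2 * pd 0 w X|
        ≤ |Gamma 3 w X| + |Gamma 5 w X| + |Gamma 6 w X| + 2 * |w X| := by
      have h1 : |r * pd 2 w X + X 2 * pd 0 w X| * (X 0 + r)
          = |X 2 * (Gamma 6 w X + 2 * w X) + r * Gamma 5 w X + X 1 * Gamma 3 w X| := by
        rw [← abs_of_pos (show (0:ℝ) < X 0 + r by linarith), ← abs_mul, mul_comm, key]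
      have h2 : |r * pd 2 w X + X 2 * pd 0 w X| * r
          ≤ |r * pd 2 w X + X 2 * pd 0 w X| * (X 0 + r) :=
        mul_le_mul_of_nonneg_left (by linarith) (abs_nonneg _)
      have h3 := hb
      rw [← h1] at h3
      have := le_trans h2 h3
      calc |r * pd 2 w X + X 2 * pd 0 w X|
          = |r * pd 2 w X + X 2 * pd 0 w X| * r / r := by field_simp
        _ ≤ r * (|Gamma 3 w X| + |Gamma 5 w X| + |Gamma 6 w X| + 2 * |w X|) / r := by
            apply div_le_div_of_nonneg_right ?_ hr0.le
            · linarith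
        _ = |Gamma 3 w X| + |Gamma 5 w X| + |Gamma 6 w X| + 2 * |w X| := by field_simp
    have hgood : pd 2 w X - -(X 2 / r) * pd 0 w X = (r * pd 2 w X + X 2 * pd 0 w X) / r := by
      field_simp; ring
    rw [hgood, abs_div, abs_of_pos hr0, div_le_iff₀ hr0]
    have hmm : 1 / r * (|Gamma 3 w X| + |Gamma 4 w X| + |Gamma 5 w X| + |Gamma 6 w X| + 2 * |w X|) * r
        = |Gamma 3 w X| + |Gamma 4 w X| + |Gamma 5 w X| + |Gamma 6 w X| + 2 * |w X| := by
      field_simp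
    rw [hmm]
    have := abs_nonneg (Gamma 4 w X); linarith

private lemma absPdGam_nonneg (u : (Fin 3 → ℝ) → ℝ) (X : Fin 3 → ℝ) : 0 ≤ absPdGam u X :=
  Finset.sum_nonneg fun _ _ => absPd_nonneg _ _

private lemma absPdGam2_nonneg (u : (Fin 3 → ℝ) → ℝ) (X : Fin 3 → ℝ) : 0 ≤ absPdGam2 u X :=
  Finset.sum_nonneg fun _ _ => Finset.sum_nonneg fun _ _ => absPd_nonneg _ _

private lemma absPd_le_absPdGam {u : (Fin 3 → ℝ) → ℝ} {X : Fin 3 → ℝ} (j : Fin 7) :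
    absPd (Gamma j u) X ≤ absPdGam u X :=
  Finset.single_le_sum (f := fun i => absPd (Gamma i u) X)
    (fun i _ => absPd_nonneg _ _) (Finset.mem_univ j)

private lemma absPd_le_absPdGam2 {u : (Fin 3 → ℝ) → ℝ} {X : Fin 3 → ℝ} (i j : Fin 7) :
    absPd (Gamma i (Gamma j u)) X ≤ absPdGam2 u X := by
  calc absPd (Gamma i (Gamma j u)) X
      ≤ ∑ j' : Fin 7, absPd (Gamma i (Gamma j' u)) X :=
        Finset.single_le_sum (f := fun j' => absPd (Gamma i (Gamma j' u)) X)
          (fun _ _ => absPd_nonneg _ _) (Finset.mem_univ j)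
    _ ≤ absPdGam2 u X :=
        Finset.single_le_sum (f := fun i' => ∑ j' : Fin 7, absPd (Gamma i' (Gamma j' u)) X)
          (fun _ _ => Finset.sum_nonneg fun _ _ => absPd_nonneg _ _) (Finset.mem_univ i)

private lemma pd_as_Gamma {u : (Fin 3 → ℝ) → ℝ} (ν : Fin 3) :
    ∃ j : Fin 7, Gamma j u = pd ν u := by
  fin_cases ν
  · exact ⟨0, rfl⟩
  · exact ⟨1, rfl⟩
  · exact ⟨2, rfl⟩

private lemma pd3_le_absPd3 {u : (Fin 3 → ℝ) → ℝ} {X : Fin 3 → ℝ} (α μ ν : Fin 3) :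
    |pd α (pd μ (pd ν u)) X| ≤ absPd3 u X := by
  rw [absPd3, ← Real.sqrt_sq_eq_abs]
  apply Real.sqrt_le_sqrt
  calc (pd α (pd μ (pd ν u)) X) ^ 2
      ≤ ∑ l : Fin 3, (pd α (pd μ (pd l u)) X) ^ 2 :=
        Finset.single_le_sum (f := fun l => (pd α (pd μ (pd l u)) X) ^ 2)
          (fun _ _ => sq_nonneg _) (Finset.mem_univ ν)
    _ ≤ ∑ j : Fin 3, ∑ l : Fin 3, (pd α (pd j (pd l u)) X) ^ 2 :=
        Finset.single_le_sum (f := fun j => ∑ l : Fin 3, (pd α (pd j (pd l u)) X) ^ 2)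
          (fun _ _ => Finset.sum_nonneg fun _ _ => sq_nonneg _) (Finset.mem_univ μ)
    _ ≤ ∑ i : Fin 3, ∑ j : Fin 3, ∑ l : Fin 3, (pd i (pd j (pd l u)) X) ^ 2 :=
        Finset.single_le_sum
          (f := fun i => ∑ j : Fin 3, ∑ l : Fin 3, (pd i (pd j (pd l u)) X) ^ 2)
          (fun _ _ => Finset.sum_nonneg fun _ _ => Finset.sum_nonneg fun _ _ => sq_nonneg _)
          (Finset.mem_univ α)

/-- Bound for a "good" first-order combination of a third derivative of `u`. -/
private lemma T_bound {u : (Fin 3 → ℝ) → ℝ} {X : Fin 3 → ℝ}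
    (hu : ContDiffAt ℝ 4 u X) (ht : 0 ≤ X 0) (hr : 1 ≤ rad X) (α μ ν : Fin 3) :
    |pd α (pd μ (pd ν u)) X
        - (![1, -(X 1 / rad X), -(X 2 / rad X)] : Fin 3 → ℝ) α * pd 0 (pd μ (pd ν u)) X|
      ≤ 14 * (1 / rad X) * (absPdGam2 u X + absPdGam u X + absPd u X) := by
  have hz : ContDiffAt ℝ 2 (pd ν u) X := pd_contDiffAt ν hu (by norm_num)
  have hgd := good_deriv_bound (w := pd μ (pd ν u)) ht hr α
  obtain ⟨jν, hjν⟩ := pd_as_Gamma (u := u) ν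
  have hB : absPd (pd ν u) X ≤ absPdGam u X := by
    rw [← hjν]; exact absPd_le_absPdGam jν
  have hGj : ∀ j : Fin 7, |Gamma j (pd μ (pd ν u)) X| ≤ absPdGam2 u X + 3 * absPdGam u X := by
    intro j
    have h1 := gamma_pd_comm_bound hz j μ
    have h2 : absPd (Gamma j (pd ν u)) X ≤ absPdGam2 u X := by
      rw [← hjν]; exact absPd_le_absPdGam2 j jν
    linarith
  have hw : |pd μ (pd ν u) X| ≤ absPdGam u X :=
    le_trans (abs_pd_le_absPd μ) hB
  have hr0 : (0:ℝ) < rad X := lt_of_lt_of_le one_pos hr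
  have hr0' : (0:ℝ) ≤ 1 / rad X := by positivity
  have hC : 0 ≤ absPd u X := absPd_nonneg _ _
  have hA : 0 ≤ absPdGam2 u X := absPdGam2_nonneg _ _
  have hBnn : 0 ≤ absPdGam u X := absPdGam_nonneg _ _
  calc |pd α (pd μ (pd ν u)) X
        - (![1, -(X 1 / rad X), -(X 2 / rad X)] : Fin 3 → ℝ) α * pd 0 (pd μ (pd ν u)) X|
      ≤ (1 / rad X) * (|Gamma 3 (pd μ (pd ν u)) X| + |Gamma 4 (pd μ (pd ν u)) X|
          + |Gamma 5 (pd μ (pd ν u)) X| + |Gamma 6 (pd μ (pd ν u)) X|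
          + 2 * |pd μ (pd ν u) X|) := hgd
    _ ≤ (1 / rad X) * (14 * (absPdGam2 u X + absPdGam u X + absPd u X)) := by
        apply mul_le_mul_of_nonneg_left _ hr0'
        have g3 := hGj 3; have g4 := hGj 4; have g5 := hGj 5; have g6 := hGj 6
        linarith
    _ = 14 * (1 / rad X) * (absPdGam2 u X + absPdGam u X + absPd u X) := by ring

private lemma abs_y_sq_mul {y p t B : ℝ} (hy : |y| ≤ 1) (ht : |t| ≤ B) :
    |y * p ^ 2 * t| ≤ p ^ 2 * B := by
  rw [abs_mul, abs_mul, abs_of_nonneg (sq_nonneg p)]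
  have h1 : |y| * p ^ 2 ≤ 1 * p ^ 2 := mul_le_mul_of_nonneg_right hy (sq_nonneg p)
  calc |y| * p ^ 2 * |t| ≤ 1 * p ^ 2 * |t| := mul_le_mul_of_nonneg_right h1 (abs_nonneg t)
    _ = p ^ 2 * |t| := by ring
    _ ≤ p ^ 2 * B := mul_le_mul_of_nonneg_left ht (sq_nonneg p)

private lemma abs_gpd_mul {g p d G A : ℝ} (hg : |g| ≤ G) (hd : |d| ≤ A) :
    |g * p * d| ≤ G * |p| * A := by
  rw [abs_mul, abs_mul]
  have h1 : |g| * |p| ≤ G * |p| := mul_le_mul_of_nonneg_right hg (abs_nonneg p)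
  calc |g| * |p| * |d| ≤ G * |p| * |d| := mul_le_mul_of_nonneg_right h1 (abs_nonneg d)
    _ ≤ G * |p| * A :=
        mul_le_mul_of_nonneg_left hd
          (mul_nonneg (le_trans (abs_nonneg g) hg) (abs_nonneg p))

end F3Aux2
set_option maxHeartbeats 1000000 in
/-- Lemma 3.2, bound for `F₃`: under the symmetry and null conditions,
for `|x| ≥ 1`, `F₃(u) = ∑ N_{αβμν} ∂_βΓ^a u ∂_tΓ^a u ∂_α∂_μ∂_ν u` satisfies
`|F₃(u)| ≲ ∑_{i=1,2} |(ω_i∂_t + ∂_i)Γ^a u| |∂_tΓ^a u| |∂³u|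
  + (1/r) |∂_tΓ^a u|² (|∂Γ²u| + |∂Γu| + |∂u|)`. -/
theorem F3_pointwise_bound
    (N : Fin 3 → Fin 3 → Fin 3 → Fin 3 → ℝ) (hsym : SymCond N) (hnull : NullCond N) :
    ∃ C : ℝ, 0 < C ∧
      ∀ (a : Fin 7 → ℕ) (u : (Fin 3 → ℝ) → ℝ) (s : Set (Fin 3 → ℝ)), IsOpen s →
        ContDiffOn ℝ (((∑ i, a i) + 4 : ℕ) : ℕ∞) u s →
        ∀ X ∈ s, 0 ≤ X 0 → 1 ≤ rad X →
          |∑ α : Fin 3, ∑ β : Fin 3, ∑ μ : Fin 3, ∑ ν : Fin 3,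
              N α β μ ν * pd β (GammaPow a u) X * pd 0 (GammaPow a u) X *
                pd α (pd μ (pd ν u)) X| ≤
            C * ((|X 1 / rad X * pd 0 (GammaPow a u) X + pd 1 (GammaPow a u) X| +
                  |X 2 / rad X * pd 0 (GammaPow a u) X + pd 2 (GammaPow a u) X|) *
                    |pd 0 (GammaPow a u) X| * absPd3 u X +
                1 / rad X * (pd 0 (GammaPow a u) X) ^ 2 *
                  (absPdGam2 u X + absPdGam u X + absPd u X)) := by
  classical
  have hM0 : (0:ℝ) ≤ ∑ α : Fin 3, ∑ β : Fin 3, ∑ μ : Fin 3, ∑ ν : Fin 3, |N α β μ ν| := by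
    refine Finset.sum_nonneg fun _ _ => Finset.sum_nonneg fun _ _ =>
      Finset.sum_nonneg fun _ _ => Finset.sum_nonneg fun _ _ => abs_nonneg _
  refine ⟨42 * (∑ α : Fin 3, ∑ β : Fin 3, ∑ μ : Fin 3, ∑ ν : Fin 3, |N α β μ ν|) + 1,
    by linarith, ?_⟩
  intro a u s hs hCD X hX ht hr
  have hu4 : ∀ Y ∈ s, ContDiffAt ℝ 4 u Y := by
    intro Y hY
    refine (hCD.contDiffAt (hs.mem_nhds hY)).of_le ?_
    have h4 : ((4:ℕ):ℕ∞) ≤ (((∑ i, a i) + 4 : ℕ) : ℕ∞) := Nat.cast_le.mpr (Nat.le_add_left 4 _)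
    have h5 := WithTop.coe_le_coe.mpr h4
    simpa using h5
  have huX : ContDiffAt ℝ 4 u X := hu4 X hX
  have hr0 : (0:ℝ) < rad X := lt_of_lt_of_le one_pos hr
  have hr2 : rad X ^ 2 = (X 1) ^ 2 + (X 2) ^ 2 := Real.sq_sqrt (by positivity)
  have hX1 : |X 1| ≤ rad X := by
    rw [← Real.sqrt_sq_eq_abs]
    exact Real.sqrt_le_sqrt (by nlinarith [sq_nonneg (X 2)])
  have hX2 : |X 2| ≤ rad X := by
    rw [← Real.sqrt_sq_eq_abs]
    exact Real.sqrt_le_sqrt (by nlinarith [sq_nonneg (X 1)])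
  set v : (Fin 3 → ℝ) → ℝ := GammaPow a u with hv
  set P : ℝ := pd 0 v X with hP
  set Yv : Fin 3 → ℝ := ![1, -(X 1 / rad X), -(X 2 / rad X)] with hYv
  set E : ℝ := absPdGam2 u X + absPdGam u X + absPd u X with hE
  set A3 : ℝ := absPd3 u X with hA3
  set Gd : ℝ := |X 1 / rad X * P + pd 1 v X| + |X 2 / rad X * P + pd 2 v X| with hGd
  set Q : ℝ := pd 0 (pd 0 (pd 0 u)) X with hQ
  have hY0 : Yv 0 = 1 := rfl
  have hY1 : Yv 1 = -(X 1 / rad X) := rfl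
  have hY2 : Yv 2 = -(X 2 / rad X) := rfl
  have hYabs : ∀ k : Fin 3, |Yv k| ≤ 1 := by
    intro k
    fin_cases k
    · show |Yv 0| ≤ 1
      rw [show Yv 0 = 1 from rfl]; norm_num
    · show |Yv 1| ≤ 1
      rw [show Yv 1 = -(X 1 / rad X) from rfl, abs_neg, abs_div, abs_of_pos hr0]
      rw [div_le_one hr0]; exact hX1
    · show |Yv 2| ≤ 1
      rw [show Yv 2 = -(X 2 / rad X) from rfl, abs_neg, abs_div, abs_of_pos hr0]
      rw [div_le_one hr0]; exact hX2
  have hGd0 : 0 ≤ Gd := by rw [hGd]; positivity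
  have hE0 : 0 ≤ E := by
    rw [hE]
    have := absPdGam2_nonneg u X; have := absPdGam_nonneg u X; have := absPd_nonneg u X
    linarith
  have hA30 : 0 ≤ A3 := by rw [hA3]; exact Real.sqrt_nonneg _
  -- the `good` quantity bound
  have hg : ∀ β : Fin 3, |pd β v X - Yv β * P| ≤ Gd := by
    intro β
    fin_cases β
    · show |pd 0 v X - Yv 0 * P| ≤ Gd
      rw [show Yv 0 = 1 from rfl, one_mul, hP, sub_self, abs_zero]; exact hGd0
    · show |pd 1 v X - Yv 1 * P| ≤ Gd
      have he : |pd 1 v X - Yv 1 * P| = |X 1 / rad X * P + pd 1 v X| := by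
        rw [show Yv 1 = -(X 1 / rad X) from rfl]; congr 1; ring
      rw [he, hGd]
      have := abs_nonneg (X 2 / rad X * P + pd 2 v X); linarith
    · show |pd 2 v X - Yv 2 * P| ≤ Gd
      have he : |pd 2 v X - Yv 2 * P| = |X 2 / rad X * P + pd 2 v X| := by
        rw [show Yv 2 = -(X 2 / rad X) from rfl]; congr 1; ring
      rw [he, hGd]
      have := abs_nonneg (X 1 / rad X * P + pd 1 v X); linarith
  -- T bounds in terms of Yv
  have hT : ∀ α' μ' ν' : Fin 3,
      |pd α' (pd μ' (pd ν' u)) X - Yv α' * pd 0 (pd μ' (pd ν' u)) X|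
        ≤ 14 * (1 / rad X) * E := by
    intro α' μ' ν'
    have h := T_bound huX ht hr α' μ' ν'
    rw [← hYv, ← hE] at h
    exact h
  -- cone condition for Yv
  have hcone : Yv 0 ^ 2 = Yv 1 ^ 2 + Yv 2 ^ 2 := by
    rw [hY0, hY1, hY2]
    field_simp
    linarith [hr2]
  have hnullY := hnull Yv hcone
  -- termwise bound
  have hterm : ∀ α β μ ν : Fin 3,
      |N α β μ ν * pd β v X * P * pd α (pd μ (pd ν u)) X
          - N α β μ ν * Yv α * Yv β * Yv μ * Yv ν * (P ^ 2 * Q)|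
        ≤ |N α β μ ν| * (Gd * |P| * A3 + 42 * (1 / rad X * P ^ 2 * E)) := by
    intro α β μ ν
    have hzν : ContDiffAt ℝ 2 (pd ν u) X := pd_contDiffAt ν huX (by norm_num)
    have hz0 : ContDiffAt ℝ 2 (pd 0 u) X := pd_contDiffAt 0 huX (by norm_num)
    have hs1 : pd 0 (pd μ (pd ν u)) X = pd μ (pd 0 (pd ν u)) X := pd_comm hzν 0 μ
    have hs2 : pd 0 (pd 0 (pd ν u)) X = pd ν (pd 0 (pd 0 u)) X := by
      have hev : (pd 0 (pd ν u)) =ᶠ[nhds X] (pd ν (pd 0 u)) := by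
        filter_upwards [hs.mem_nhds hX] with Y hY
        exact pd_comm ((hu4 Y hY).of_le (by norm_num)) 0 ν
      have ha : pd 0 (pd 0 (pd ν u)) X = pd 0 (pd ν (pd 0 u)) X := by
        show fderiv ℝ (pd 0 (pd ν u)) X (Pi.single 0 1)
          = fderiv ℝ (pd ν (pd 0 u)) X (Pi.single 0 1)
        rw [hev.fderiv_eq]
      exact ha.trans (pd_comm hz0 0 ν)
    have hdecomp : N α β μ ν * pd β v X * P * pd α (pd μ (pd ν u)) X
        - N α β μ ν * Yv α * Yv β * Yv μ * Yv ν * (P ^ 2 * Q)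
        = N α β μ ν * ((pd β v X - Yv β * P) * P * pd α (pd μ (pd ν u)) X)
          + N α β μ ν * (Yv β * P ^ 2
              * (pd α (pd μ (pd ν u)) X - Yv α * pd 0 (pd μ (pd ν u)) X))
          + N α β μ ν * (Yv β * Yv α * P ^ 2
              * (pd μ (pd 0 (pd ν u)) X - Yv μ * pd 0 (pd 0 (pd ν u)) X))
          + N α β μ ν * (Yv β * Yv α * Yv μ * P ^ 2
              * (pd ν (pd 0 (pd 0 u)) X - Yv ν * Q)) := by
      rw [hQ]
      linear_combination (N α β μ ν * Yv β * P ^ 2 * Yv α) * hs1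
        + (N α β μ ν * Yv β * Yv α * Yv μ * P ^ 2) * hs2
    rw [hdecomp]
    have b1 : |(pd β v X - Yv β * P) * P * pd α (pd μ (pd ν u)) X| ≤ Gd * |P| * A3 := by
      have hd3 : |pd α (pd μ (pd ν u)) X| ≤ A3 := by
        rw [hA3]; exact pd3_le_absPd3 α μ ν
      exact abs_gpd_mul (hg β) hd3
    have b2 : |Yv β * P ^ 2 * (pd α (pd μ (pd ν u)) X - Yv α * pd 0 (pd μ (pd ν u)) X)|
        ≤ P ^ 2 * (14 * (1 / rad X) * E) := abs_y_sq_mul (hYabs β) (hT α μ ν)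
    have b3 : |Yv β * Yv α * P ^ 2 * (pd μ (pd 0 (pd ν u)) X - Yv μ * pd 0 (pd 0 (pd ν u)) X)|
        ≤ P ^ 2 * (14 * (1 / rad X) * E) := by
      refine abs_y_sq_mul ?_ (hT μ 0 ν)
      calc |Yv β * Yv α| = |Yv β| * |Yv α| := abs_mul _ _
        _ ≤ 1 * 1 := mul_le_mul (hYabs β) (hYabs α) (abs_nonneg _) zero_le_one
        _ = 1 := by norm_num
    have b4 : |Yv β * Yv α * Yv μ * P ^ 2 * (pd ν (pd 0 (pd 0 u)) X - Yv ν * Q)|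
        ≤ P ^ 2 * (14 * (1 / rad X) * E) := by
      have hQ' : |pd ν (pd 0 (pd 0 u)) X - Yv ν * Q| ≤ 14 * (1 / rad X) * E := by
        rw [hQ]; exact hT ν 0 0
      refine abs_y_sq_mul ?_ hQ'
      calc |Yv β * Yv α * Yv μ| = |Yv β * Yv α| * |Yv μ| := abs_mul _ _
        _ ≤ 1 * 1 := by
            refine mul_le_mul ?_ (hYabs μ) (abs_nonneg _) zero_le_one
            calc |Yv β * Yv α| = |Yv β| * |Yv α| := abs_mul _ _
              _ ≤ 1 * 1 := mul_le_mul (hYabs β) (hYabs α) (abs_nonneg _) zero_le_one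
              _ = 1 := by norm_num
        _ = 1 := by norm_num
    have habs4 : ∀ w x y z : ℝ, |w + x + y + z| ≤ |w| + |x| + |y| + |z| := by
      intro w x y z
      calc |w + x + y + z| ≤ |w + x + y| + |z| := abs_add_le _ _
        _ ≤ |w + x| + |y| + |z| := by have := abs_add_le (w + x) y; linarith
        _ ≤ |w| + |x| + |y| + |z| := by have := abs_add_le w x; linarith
    have hNmul : ∀ x : ℝ, |N α β μ ν * x| = |N α β μ ν| * |x| := fun x => abs_mul _ _
    calc |N α β μ ν * ((pd β v X - Yv β * P) * P * pd α (pd μ (pd ν u)) X)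
          + N α β μ ν * (Yv β * P ^ 2
              * (pd α (pd μ (pd ν u)) X - Yv α * pd 0 (pd μ (pd ν u)) X))
          + N α β μ ν * (Yv β * Yv α * P ^ 2
              * (pd μ (pd 0 (pd ν u)) X - Yv μ * pd 0 (pd 0 (pd ν u)) X))
          + N α β μ ν * (Yv β * Yv α * Yv μ * P ^ 2 * (pd ν (pd 0 (pd 0 u)) X - Yv ν * Q))|
        ≤ |N α β μ ν| * |(pd β v X - Yv β * P) * P * pd α (pd μ (pd ν u)) X|
          + |N α β μ ν| * |Yv β * P ^ 2
              * (pd α (pd μ (pd ν u)) X - Yv α * pd 0 (pd μ (pd ν u)) X)|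
          + |N α β μ ν| * |Yv β * Yv α * P ^ 2
              * (pd μ (pd 0 (pd ν u)) X - Yv μ * pd 0 (pd 0 (pd ν u)) X)|
          + |N α β μ ν| * |Yv β * Yv α * Yv μ * P ^ 2
              * (pd ν (pd 0 (pd 0 u)) X - Yv ν * Q)| := by
          have := habs4 (N α β μ ν * ((pd β v X - Yv β * P) * P * pd α (pd μ (pd ν u)) X))
            (N α β μ ν * (Yv β * P ^ 2
              * (pd α (pd μ (pd ν u)) X - Yv α * pd 0 (pd μ (pd ν u)) X)))
            (N α β μ ν * (Yv β * Yv α * P ^ 2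
              * (pd μ (pd 0 (pd ν u)) X - Yv μ * pd 0 (pd 0 (pd ν u)) X)))
            (N α β μ ν * (Yv β * Yv α * Yv μ * P ^ 2 * (pd ν (pd 0 (pd 0 u)) X - Yv ν * Q)))
          simpa only [hNmul] using this
      _ ≤ |N α β μ ν| * (Gd * |P| * A3 + 42 * (1 / rad X * P ^ 2 * E)) := by
          have hNn : 0 ≤ |N α β μ ν| := abs_nonneg _
          have c1 := mul_le_mul_of_nonneg_left b1 hNn
          have c2 := mul_le_mul_of_nonneg_left b2 hNn
          have c3 := mul_le_mul_of_nonneg_left b3 hNn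
          have c4 := mul_le_mul_of_nonneg_left b4 hNn
          have heq : |N α β μ ν| * (Gd * |P| * A3) + |N α β μ ν| * (P ^ 2 * (14 * (1 / rad X) * E))
              + |N α β μ ν| * (P ^ 2 * (14 * (1 / rad X) * E))
              + |N α β μ ν| * (P ^ 2 * (14 * (1 / rad X) * E))
              = |N α β μ ν| * (Gd * |P| * A3 + 42 * (1 / rad X * P ^ 2 * E)) := by ring
          exact (add_le_add (add_le_add (add_le_add c1 c2) c3) c4).trans (le_of_eq heq)
  -- split the sum and use the null condition
  have hsplit : (∑ α : Fin 3, ∑ β : Fin 3, ∑ μ : Fin 3, ∑ ν : Fin 3,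
        N α β μ ν * pd β v X * P * pd α (pd μ (pd ν u)) X)
      = ∑ α : Fin 3, ∑ β : Fin 3, ∑ μ : Fin 3, ∑ ν : Fin 3,
          (N α β μ ν * pd β v X * P * pd α (pd μ (pd ν u)) X
            - N α β μ ν * Yv α * Yv β * Yv μ * Yv ν * (P ^ 2 * Q)) := by
    have h0 : (∑ α : Fin 3, ∑ β : Fin 3, ∑ μ : Fin 3, ∑ ν : Fin 3,
          N α β μ ν * Yv α * Yv β * Yv μ * Yv ν) * (P ^ 2 * Q) = 0 := by
      rw [hnullY, zero_mul]
    have h1 : (∑ α : Fin 3, ∑ β : Fin 3, ∑ μ : Fin 3, ∑ ν : Fin 3,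
          N α β μ ν * pd β v X * P * pd α (pd μ (pd ν u)) X)
        = (∑ α : Fin 3, ∑ β : Fin 3, ∑ μ : Fin 3, ∑ ν : Fin 3,
            N α β μ ν * pd β v X * P * pd α (pd μ (pd ν u)) X)
          - (∑ α : Fin 3, ∑ β : Fin 3, ∑ μ : Fin 3, ∑ ν : Fin 3,
              N α β μ ν * Yv α * Yv β * Yv μ * Yv ν) * (P ^ 2 * Q) := by
      rw [h0, sub_zero]
    rw [h1, Finset.sum_mul, ← Finset.sum_sub_distrib]
    refine Finset.sum_congr rfl fun α _ => ?_
    rw [Finset.sum_mul, ← Finset.sum_sub_distrib]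
    refine Finset.sum_congr rfl fun β _ => ?_
    rw [Finset.sum_mul, ← Finset.sum_sub_distrib]
    refine Finset.sum_congr rfl fun μ _ => ?_
    rw [Finset.sum_mul, ← Finset.sum_sub_distrib]
  rw [hsplit]
  have habsle : |∑ α : Fin 3, ∑ β : Fin 3, ∑ μ : Fin 3, ∑ ν : Fin 3,
        (N α β μ ν * pd β v X * P * pd α (pd μ (pd ν u)) X
          - N α β μ ν * Yv α * Yv β * Yv μ * Yv ν * (P ^ 2 * Q))|
      ≤ ∑ α : Fin 3, ∑ β : Fin 3, ∑ μ : Fin 3, ∑ ν : Fin 3,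
          |N α β μ ν| * (Gd * |P| * A3 + 42 * (1 / rad X * P ^ 2 * E)) := by
    refine (Finset.abs_sum_le_sum_abs _ _).trans (Finset.sum_le_sum fun α _ => ?_)
    refine (Finset.abs_sum_le_sum_abs _ _).trans (Finset.sum_le_sum fun β _ => ?_)
    refine (Finset.abs_sum_le_sum_abs _ _).trans (Finset.sum_le_sum fun μ _ => ?_)
    refine (Finset.abs_sum_le_sum_abs _ _).trans (Finset.sum_le_sum fun ν _ => ?_)
    exact hterm α β μ ν
  have hsum_eq : (∑ α : Fin 3, ∑ β : Fin 3, ∑ μ : Fin 3, ∑ ν : Fin 3,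
        |N α β μ ν| * (Gd * |P| * A3 + 42 * (1 / rad X * P ^ 2 * E)))
      = (∑ α : Fin 3, ∑ β : Fin 3, ∑ μ : Fin 3, ∑ ν : Fin 3, |N α β μ ν|)
        * (Gd * |P| * A3 + 42 * (1 / rad X * P ^ 2 * E)) := by
    simp only [Finset.sum_mul]
  have hT1 : 0 ≤ Gd * |P| * A3 := by positivity
  have hT2 : 0 ≤ 1 / rad X * P ^ 2 * E := by positivity
  have key : ∀ m T1 T2 : ℝ, 0 ≤ m → 0 ≤ T1 → 0 ≤ T2 →
      m * (T1 + 42 * T2) ≤ (42 * m + 1) * (T1 + T2) := by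
    intro m T1 T2 hm h1 h2; nlinarith [mul_nonneg hm h1, mul_nonneg hm h2]
  refine (habsle.trans (le_of_eq hsum_eq)).trans ?_
  exact key _ _ _ hM0 hT1 hT2

end
end

section
/- Let A=(A₀,A₁,A₂)∈ℝ³ with A≠0, and let N_{μδ} (μ,δ∈{0,1,2}) be real coefficients. Then N_{μδ}X_μX_δ=0 holds for all X in the light cone Σ if and only if A_l N_{μδ} X_l X_μ X_δ = 0 (summed over l,μ,δ) holds for all X in Σ. -/
noncomputable section

open MeasureTheory Real Set

private def qf (N : Fin 3 → Fin 3 → ℝ) (c s : ℝ) : ℝ :=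
  ∑ μ : Fin 3, ∑ δ : Fin 3, N μ δ * (![1, c, s] μ) * (![1, c, s] δ)

private lemma fact3 (A : Fin 3 → ℝ) (N : Fin 3 → Fin 3 → ℝ) (X : Fin 3 → ℝ) :
    ∑ l : Fin 3, ∑ μ : Fin 3, ∑ δ : Fin 3, A l * N μ δ * X l * X μ * X δ =
      (∑ l : Fin 3, A l * X l) * ∑ μ : Fin 3, ∑ δ : Fin 3, N μ δ * X μ * X δ := by
  simp [Fin.sum_univ_three]; ring

private lemma qf_cont (N : Fin 3 → Fin 3 → ℝ) (c s : ℝ) :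
    Continuous fun δ : ℝ => qf N (c * Real.cos δ - s * Real.sin δ)
      (s * Real.cos δ + c * Real.sin δ) := by
  simp only [qf, Fin.sum_univ_three, Matrix.cons_val_zero, Matrix.cons_val_one,
    Matrix.head_cons, Matrix.cons_val_two, Matrix.tail_cons]
  fun_prop

private lemma qf_zero (A : Fin 3 → ℝ) (hA : A ≠ 0) (N : Fin 3 → Fin 3 → ℝ)
    (h : ∀ X : Fin 3 → ℝ, (X 0) ^ 2 = (X 1) ^ 2 + (X 2) ^ 2 →
        ∑ l : Fin 3, ∑ μ : Fin 3, ∑ δ : Fin 3, A l * N μ δ * X l * X μ * X δ = 0)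
    (c s : ℝ) (hcs : c ^ 2 + s ^ 2 = 1) : qf N c s = 0 := by
  by_contra hq
  set f : ℝ → ℝ := fun δ => qf N (c * Real.cos δ - s * Real.sin δ)
    (s * Real.cos δ + c * Real.sin δ) with hf
  have hf0 : f 0 ≠ 0 := by simpa [hf] using hq
  have hopen : IsOpen {δ : ℝ | f δ ≠ 0} := by
    have : {δ : ℝ | f δ ≠ 0} = f ⁻¹' ({0}ᶜ) := rfl
    rw [this]
    exact isOpen_compl_singleton.preimage (qf_cont N c s)
  obtain ⟨ε, hε, hball⟩ := Metric.isOpen_iff.mp hopen 0 hf0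
  -- G equations
  have hG : ∀ δ : ℝ, |δ| < ε →
      A 0 + A 1 * (c * Real.cos δ - s * Real.sin δ)
        + A 2 * (s * Real.cos δ + c * Real.sin δ) = 0 := by
    intro δ hδ
    have hmem : f δ ≠ 0 := hball (by simpa [Metric.mem_ball, Real.dist_eq] using hδ)
    set C := Real.cos δ; set S := Real.sin δ
    have hcirc : (![1, c * C - s * S, s * C + c * S] 0) ^ 2 =
        (![1, c * C - s * S, s * C + c * S] 1) ^ 2 +
        (![1, c * C - s * S, s * C + c * S] 2) ^ 2 := by
      have hp := Real.sin_sq_add_cos_sq δ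
      simp only [Matrix.cons_val_zero, Matrix.cons_val_one, Matrix.head_cons,
        Matrix.cons_val_two, Matrix.tail_cons]
      nlinarith [hp, hcs]
    have hX := h ![1, c * C - s * S, s * C + c * S] hcirc
    rw [fact3] at hX
    have hQ : (∑ μ : Fin 3, ∑ δ' : Fin 3, N μ δ' *
        (![1, c * C - s * S, s * C + c * S] μ) * (![1, c * C - s * S, s * C + c * S] δ')) ≠ 0 := by
      exact hmem
    have hAX := (mul_eq_zero.mp hX).resolve_right hQ
    simpa [Fin.sum_univ_three, mul_one] using hAX
  set δ0 : ℝ := min (ε / 2) 1 with hδ0def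
  have hδ0pos : 0 < δ0 := lt_min (by linarith) one_pos
  have hδ0ε : |δ0| < ε := by
    rw [abs_of_pos hδ0pos]
    calc δ0 ≤ ε / 2 := min_le_left _ _
      _ < ε := by linarith
  have hδ0ε' : |(-δ0)| < ε := by rwa [abs_neg]
  have hS : 0 < Real.sin δ0 :=
    Real.sin_pos_of_pos_of_lt_pi hδ0pos
      (lt_of_le_of_lt (min_le_right _ _) (by linarith [Real.pi_gt_three]))
  have hCle : Real.cos δ0 ≤ 1 := Real.cos_le_one δ0
  have hC : Real.cos δ0 < 1 := by
    nlinarith [Real.sin_sq_add_cos_sq δ0, Real.neg_one_le_cos δ0, mul_pos hS hS]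
  have e0 := hG 0 (by simpa [abs_of_pos hε] using hε)
  have e1 := hG δ0 hδ0ε
  have e2 := hG (-δ0) hδ0ε'
  rw [Real.cos_neg, Real.sin_neg] at e2
  simp only [Real.cos_zero, Real.sin_zero, mul_one, mul_zero, sub_zero, add_zero] at e0
  set C := Real.cos δ0; set S := Real.sin δ0
  have hA0 : A 0 = 0 := by
    have h2 : A 0 * (2 * (1 - C)) = 0 := by linear_combination e1 + e2 - 2 * C * e0
    exact (mul_eq_zero.mp h2).resolve_right (by nlinarith)
  have hs1 : A 1 * c + A 2 * s = 0 := by linear_combination e0 - hA0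
  have hs2' : (A 2 * c - A 1 * s) * (2 * S) = 0 := by linear_combination e1 - e2
  have hs2 : A 2 * c - A 1 * s = 0 :=
    (mul_eq_zero.mp hs2').resolve_right (by positivity)
  have hA1 : A 1 = 0 := by linear_combination c * hs1 - s * hs2 - A 1 * hcs
  have hA2 : A 2 = 0 := by linear_combination s * hs1 + c * hs2 - A 2 * hcs
  exact hA (funext fun i => by fin_cases i <;> assumption)


/-- Remark 1.3 / Section 5: for `A ≠ 0`, the null condition
`N_{μδ} X_μ X_δ = 0` on the light cone is equivalent to
`A_l N_{μδ} X_l X_μ X_δ = 0` on the light cone. -/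
theorem null_condition_equivalence
    (A : Fin 3 → ℝ) (hA : A ≠ 0) (N : Fin 3 → Fin 3 → ℝ) :
    NullCond2 N ↔
      ∀ X : Fin 3 → ℝ, (X 0) ^ 2 = (X 1) ^ 2 + (X 2) ^ 2 →
        ∑ l : Fin 3, ∑ μ : Fin 3, ∑ δ : Fin 3, A l * N μ δ * X l * X μ * X δ = 0 := by
  unfold NullCond2
  constructor
  · intro hN X hX
    rw [fact3, hN X hX, mul_zero]
  · intro h X hX
    rcases eq_or_ne (X 0) 0 with h0 | h0
    · have h1 : X 1 = 0 := by nlinarith [sq_nonneg (X 1), sq_nonneg (X 2)]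
      have h2 : X 2 = 0 := by nlinarith [sq_nonneg (X 1), sq_nonneg (X 2)]
      simp [Fin.sum_univ_three, h0, h1, h2]
    · set t := X 0 with ht
      set c := X 1 / t with hc
      set s := X 2 / t with hs
      have hX1 : X 1 = c * t := by rw [hc, div_mul_cancel₀ _ h0]
      have hX2 : X 2 = s * t := by rw [hs, div_mul_cancel₀ _ h0]
      have hcs : c ^ 2 + s ^ 2 = 1 := by
        rw [hc, hs]; field_simp; linarith [hX]
      have hq := qf_zero A hA N h c s hcs
      simp only [qf, Fin.sum_univ_three, Matrix.cons_val_zero, Matrix.cons_val_one,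
        Matrix.head_cons, Matrix.cons_val_two, Matrix.tail_cons] at hq
      simp only [Fin.sum_univ_three]
      rw [hX1, hX2]
      linear_combination (t ^ 2) * hq


end
end

section
/- Let C₁≥1, M>0 and 0<γ<1/8. There exist constants ε₀∈(0,e^{−M}) and C₀>1, depending only on C₁, M and γ, with the following property: for any T∈(0,∞], any 0<ε≤ε₀, and any continuously differentiable functions E,F:[0,T)→[0,∞) satisfying E(0)≤M², F(0)≤ε², E'(t) ≤ C₁⟨t⟩^{−1} E(t) F(t)^{1/2} and F'(t) ≤ C₁⟨t⟩^{−3/2} E(t)^{1/2} F(t) for all t∈[0,T), one has E(t) ≤ C₀M²⟨t⟩^{γ} and F(t) ≤ C₀ε²e^{C₀M} for all t∈[0,T). -/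
noncomputable section
open Real Set Filter Topology

lemma jb_pos (t : ℝ) : 0 < jb t := Real.sqrt_pos.mpr (by positivity)

lemma jb_zero : jb 0 = 1 := by simp [jb]

lemma jb_continuous : Continuous jb :=
  (continuous_const.add (continuous_pow 2)).sqrt

lemma jb_rpow_continuous (p : ℝ) : Continuous (fun s => jb s ^ p) := by
  rw [continuous_iff_continuousAt]
  intro x
  exact (Real.continuousAt_rpow_const (jb x) p (Or.inl (jb_pos x).ne')).comp
    jb_continuous.continuousAt

lemma add_le_sqrt_two_mul_jb {s : ℝ} (hs : 0 ≤ s) : 1 + s ≤ Real.sqrt 2 * jb s := by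
  have h : Real.sqrt 2 * jb s = Real.sqrt (2 * (1 + s ^ 2)) := by
    rw [jb, ← Real.sqrt_mul (by norm_num)]
  rw [h]
  have h2 : 1 + s = Real.sqrt ((1 + s) ^ 2) := by
    rw [Real.sqrt_sq (by linarith)]
  rw [h2]
  exact Real.sqrt_le_sqrt (by nlinarith [sq_nonneg (s - 1)])

lemma sqrt_two_rpow_le_two {p : ℝ} (hp : 0 ≤ p) (hp' : p ≤ 2) : Real.sqrt 2 ^ p ≤ 2 := by
  calc Real.sqrt 2 ^ p ≤ Real.sqrt 2 ^ (2:ℝ) :=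
        Real.rpow_le_rpow_of_exponent_le (by
          rw [show (1:ℝ) = Real.sqrt 1 by simp]
          exact Real.sqrt_le_sqrt (by norm_num)) hp'
  _ = 2 := by
        rw [show (2:ℝ) = ((2:ℕ):ℝ) by norm_num, Real.rpow_natCast,
          Real.sq_sqrt (by norm_num)]

lemma add_rpow_le_two_mul (q : ℝ) (hq : 0 ≤ q) (hq' : q ≤ 2) {s : ℝ} (hs : 0 ≤ s) :
    (1 + s) ^ q ≤ 2 * jb s ^ q := by
  have hjb := jb_pos s
  calc (1 + s) ^ q ≤ (Real.sqrt 2 * jb s) ^ q :=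
        Real.rpow_le_rpow (by linarith) (add_le_sqrt_two_mul_jb hs) hq
  _ = Real.sqrt 2 ^ q * jb s ^ q := Real.mul_rpow (Real.sqrt_nonneg 2) hjb.le
  _ ≤ 2 * jb s ^ q :=
      mul_le_mul_of_nonneg_right (sqrt_two_rpow_le_two hq hq')
        (Real.rpow_nonneg hjb.le q)

lemma jb_rpow_neg_le {q : ℝ} (hq : 0 ≤ q) (hq' : q ≤ 2) {s : ℝ} (hs : 0 ≤ s) :
    jb s ^ (-q) ≤ 2 * (1 + s) ^ (-q) := by
  have h1s : (0:ℝ) < 1 + s := by linarith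
  have hjb := jb_pos s
  have key := add_rpow_le_two_mul q hq hq' hs
  rw [Real.rpow_neg hjb.le, Real.rpow_neg h1s.le, inv_eq_one_div, inv_eq_one_div,
    mul_one_div, div_le_div_iff₀ (Real.rpow_pos_of_pos hjb q) (Real.rpow_pos_of_pos h1s q)]
  linarith

set_option maxHeartbeats 1000000

/-- Grönwall-type comparison. -/
lemma gron (a b : ℝ) (f f' g k : ℝ → ℝ)
    (hf : ContinuousOn f (Icc a b))
    (hfd : ∀ x ∈ Ioo a b, HasDerivAt f (f' x) x)
    (hg : ContinuousOn g (Icc a b))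
    (hgd : ∀ x ∈ Ioo a b, HasDerivAt g (k x * g x) x)
    (hgpos : ∀ x ∈ Icc a b, 0 < g x)
    (hle : ∀ x ∈ Ioo a b, f' x ≤ k x * f x)
    (h0 : f a ≤ g a) : ∀ x ∈ Icc a b, f x ≤ g x := by
  have hA : AntitoneOn (fun s => f s / g s) (Icc a b) := by
    apply antitoneOn_of_deriv_nonpos (convex_Icc a b)
    · exact hf.div hg fun x hx => (hgpos x hx).ne'
    · intro x hx
      rw [interior_Icc] at hx
      exact (((hfd x hx).div (hgd x hx)
        (hgpos x (Ioo_subset_Icc_self hx)).ne')).differentiableAt.differentiableWithinAt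
    · intro x hx
      rw [interior_Icc] at hx
      have hgx := hgpos x (Ioo_subset_Icc_self hx)
      have hd := ((hfd x hx).div (hgd x hx) hgx.ne').deriv
      rw [show (fun s => f s / g s) = f / g from rfl, hd]
      apply div_nonpos_of_nonpos_of_nonneg _ (sq_nonneg _)
      nlinarith [hle x hx]
  intro x hx
  have hax : a ∈ Icc a b := ⟨le_refl a, hx.1.trans hx.2⟩
  have h1 := hA hax hx hx.1
  have hga := hgpos a hax
  have hgx := hgpos x hx
  have h2 : f a / g a ≤ 1 := (div_le_one hga).mpr h0
  exact (div_le_one hgx).mp (h1.trans h2)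

/-- the continuity/bootstrap argument behind Theorem 1.1: if
`E, F : [0,T) → [0,∞)` are continuously differentiable with `E(0) ≤ M²`, `F(0) ≤ ε²`,
`E' ≤ C₁⟨t⟩⁻¹ E F^{1/2}` and `F' ≤ C₁⟨t⟩^{-3/2} E^{1/2} F`, then
`E(t) ≤ C₀M²⟨t⟩^γ` and `F(t) ≤ C₀ε²e^{C₀M}` on `[0,T)`, where `ε₀ ∈ (0, e^{-M})` and
`C₀ > 1` depend only on `C₁, M, γ`. Here `T ∈ (0, ∞]`. -/
theorem bootstrap_differential_inequalities
    (C₁ M γ : ℝ) (hC₁ : 1 ≤ C₁) (hM : 0 < M) (hγ0 : 0 < γ) (hγ : γ < 1 / 8) :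
    ∃ ε₀ C₀ : ℝ, 0 < ε₀ ∧ ε₀ < Real.exp (-M) ∧ 1 < C₀ ∧
      ∀ (T : EReal) (ε : ℝ) (E F E' F' : ℝ → ℝ), 0 < T → 0 < ε → ε ≤ ε₀ →
        (∀ t : ℝ, 0 ≤ t → (t : EReal) < T → 0 ≤ E t ∧ 0 ≤ F t) →
        (∀ t : ℝ, 0 ≤ t → (t : EReal) < T →
          HasDerivWithinAt E (E' t) {s : ℝ | 0 ≤ s ∧ (s : EReal) < T} t ∧
          HasDerivWithinAt F (F' t) {s : ℝ | 0 ≤ s ∧ (s : EReal) < T} t) →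
        ContinuousOn E' {s : ℝ | 0 ≤ s ∧ (s : EReal) < T} →
        ContinuousOn F' {s : ℝ | 0 ≤ s ∧ (s : EReal) < T} →
        E 0 ≤ M ^ 2 → F 0 ≤ ε ^ 2 →
        (∀ t : ℝ, 0 ≤ t → (t : EReal) < T →
          E' t ≤ C₁ * (jb t)⁻¹ * E t * Real.sqrt (F t)) →
        (∀ t : ℝ, 0 ≤ t → (t : EReal) < T →
          F' t ≤ C₁ * jb t ^ (-(3 : ℝ) / 2) * Real.sqrt (E t) * F t) →
        ∀ t : ℝ, 0 ≤ t → (t : EReal) < T →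
          E t ≤ C₀ * M ^ 2 * jb t ^ γ ∧ F t ≤ C₀ * ε ^ 2 * Real.exp (C₀ * M) := by
  have hC₁0 : (0:ℝ) < C₁ := by linarith
  set C₀ : ℝ := 10 * C₁ with hC₀def
  set ε₀ : ℝ := min (Real.exp (-M) / 2) (γ / (2 * C₁ * Real.exp (5 * C₁ * M))) with hε₀def
  have hexpM : (0:ℝ) < Real.exp (-M) := Real.exp_pos _
  have hε₀pos : 0 < ε₀ := lt_min (by linarith) (by positivity)
  refine ⟨ε₀, C₀, hε₀pos, (min_le_left _ _).trans_lt (by linarith), by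
    simp only [hC₀def]; nlinarith, ?_⟩
  intro T ε E F E' F' hT hε hεε₀ hpos hderiv hcE' hcF' hE0 hF0 hEineq hFineq t ht0 htT
  set β : ℝ := (1 - γ) / 2 with hβdef
  have hβ : 0 < β := by simp only [hβdef]; linarith
  set c₁ : ℝ := 4 * C₁ * M / β with hc₁def
  have hc₁pos : 0 < c₁ := by positivity
  have hc₁le : c₁ ≤ 10 * C₁ * M := by
    rw [hc₁def, div_le_iff₀ hβ]
    simp only [hβdef]
    nlinarith [mul_pos hC₁0 hM, mul_nonneg (mul_pos hC₁0 hM).le (by linarith : (0:ℝ) ≤ 1 - 5*γ)]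
  set D : Set ℝ := {s : ℝ | 0 ≤ s ∧ (s : EReal) < T} with hDdef
  have hIccD : Icc (0:ℝ) t ⊆ D := by
    intro s hs
    refine ⟨hs.1, lt_of_le_of_lt ?_ htT⟩
    exact_mod_cast hs.2
  have hEcont : ContinuousOn E (Icc 0 t) :=
    fun s hs => ((hderiv s (hIccD hs).1 (hIccD hs).2).1.continuousWithinAt).mono hIccD
  have hFcont : ContinuousOn F (Icc 0 t) :=
    fun s hs => ((hderiv s (hIccD hs).1 (hIccD hs).2).2.continuousWithinAt).mono hIccD
  have hEF : ∀ s ∈ Icc (0:ℝ) t, 0 ≤ E s ∧ 0 ≤ F s :=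
    fun s hs => hpos s (hIccD hs).1 (hIccD hs).2
  have hDnhds : ∀ x ∈ Ioo (0:ℝ) t, D ∈ 𝓝 x := by
    intro x hx
    refine mem_of_superset (Ioo_mem_nhds hx.1 hx.2) ?_
    intro s hs
    exact ⟨hs.1.le, lt_trans (by exact_mod_cast hs.2) htT⟩
  have hEderiv : ∀ x ∈ Ioo (0:ℝ) t, HasDerivAt E (E' x) x := by
    intro x hx
    have hxD : x ∈ D := ⟨hx.1.le, lt_trans (by exact_mod_cast hx.2) htT⟩
    exact ((hderiv x hxD.1 hxD.2).1).hasDerivAt (hDnhds x hx)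
  have hFderiv : ∀ x ∈ Ioo (0:ℝ) t, HasDerivAt F (F' x) x := by
    intro x hx
    have hxD : x ∈ D := ⟨hx.1.le, lt_trans (by exact_mod_cast hx.2) htT⟩
    exact ((hderiv x hxD.1 hxD.2).2).hasDerivAt (hDnhds x hx)
  set g₁ : ℝ → ℝ := fun s => ε ^ 2 * Real.exp (c₁ * (1 - (1 + s) ^ (-β))) with hg₁def
  set k₁ : ℝ → ℝ := fun s => 4 * C₁ * M * (1 + s) ^ (-β - 1) with hk₁def
  set g₂ : ℝ → ℝ := fun s => M ^ 2 * (1 + s) ^ γ with hg₂def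
  set k₂ : ℝ → ℝ := fun s => γ / (1 + s) with hk₂def
  have hc₁β : c₁ * β = 4 * C₁ * M := div_mul_cancel₀ _ hβ.ne'
  have hsqrtE : ∀ s : ℝ, E s ≤ 4 * M ^ 2 * jb s ^ γ →
      Real.sqrt (E s) ≤ 2 * M * jb s ^ (γ / 2) := by
    intro s hs
    have h4 : 4 * M ^ 2 * jb s ^ γ = (2 * M * jb s ^ (γ / 2)) ^ 2 := by
      rw [mul_pow, mul_pow, ← Real.rpow_natCast (jb s ^ (γ / 2)) 2,
        ← Real.rpow_mul (jb_pos s).le]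
      norm_num
    calc Real.sqrt (E s) ≤ Real.sqrt (4 * M ^ 2 * jb s ^ γ) := Real.sqrt_le_sqrt hs
    _ = 2 * M * jb s ^ (γ / 2) := by
        rw [h4, Real.sqrt_sq (mul_nonneg (by linarith) (Real.rpow_nonneg (jb_pos s).le _))]
  have improve : ∀ u ∈ Icc (0:ℝ) t, (∀ s ∈ Icc (0:ℝ) u, E s ≤ 4 * M ^ 2 * jb s ^ γ) →
      ∀ s ∈ Icc (0:ℝ) u, F s ≤ ε ^ 2 * Real.exp c₁ ∧ E s ≤ 2 * M ^ 2 * jb s ^ γ := by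
    intro u hu hboot
    have hIccu : Icc (0:ℝ) u ⊆ Icc 0 t := Icc_subset_Icc le_rfl hu.2
    have hIoou : Ioo (0:ℝ) u ⊆ Ioo 0 t := Ioo_subset_Ioo le_rfl hu.2
    have h1pos : ∀ s ∈ Icc (0:ℝ) u, (0:ℝ) < 1 + s := fun s hs => by nlinarith [hs.1]
    have hg₁d : ∀ x ∈ Ioo (0:ℝ) u, HasDerivAt g₁ (k₁ x * g₁ x) x := by
      intro x hx
      have h1x : (0:ℝ) < 1 + x := by nlinarith [hx.1]
      have hv : HasDerivAt (fun s : ℝ => (1 + s) ^ (-β))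
          (1 * (-β) * (1 + x) ^ (-β - 1)) x :=
        HasDerivAt.rpow_const ((hasDerivAt_id x).const_add 1) (Or.inl h1x.ne')
      have hw := (((hasDerivAt_const x (1:ℝ)).sub hv).const_mul c₁).exp.const_mul (ε ^ 2)
      refine hw.congr_deriv ?_
      symm
      simp only [hk₁def, hg₁def, Pi.sub_apply]
      have h5 : Real.exp (c₁ * (1 - (1 + x) ^ (-β))) *
          (c₁ * (0 - 1 * (-β) * (1 + x) ^ (-β - 1))) =
          (c₁ * β) * ((1 + x) ^ (-β - 1) * Real.exp (c₁ * (1 - (1 + x) ^ (-β)))) := by ring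
      rw [mul_comm (ε^2), mul_assoc, h5, hc₁β]
      ring
    have hg₂d : ∀ x ∈ Ioo (0:ℝ) u, HasDerivAt g₂ (k₂ x * g₂ x) x := by
      intro x hx
      have h1x : (0:ℝ) < 1 + x := by nlinarith [hx.1]
      have hv : HasDerivAt (fun s : ℝ => (1 + s) ^ γ)
          (1 * γ * (1 + x) ^ (γ - 1)) x :=
        HasDerivAt.rpow_const ((hasDerivAt_id x).const_add 1) (Or.inl h1x.ne')
      have hw := hv.const_mul (M ^ 2)
      refine hw.congr_deriv ?_
      symm
      simp only [hk₂def, hg₂def]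
      have hsplit : (1 + x) ^ γ = (1 + x) ^ (γ - 1) * (1 + x) := by
        rw [← Real.rpow_add_one h1x.ne' (γ - 1)]; ring_nf
      rw [hsplit]
      field_simp
    have hFle : ∀ s ∈ Icc (0:ℝ) u, F s ≤ g₁ s := by
      apply gron 0 u F F' g₁ k₁ (hFcont.mono hIccu) (fun x hx => hFderiv x (hIoou hx))
      · apply continuousOn_const.mul
        apply Real.continuous_exp.comp_continuousOn
        apply continuousOn_const.mul
        apply continuousOn_const.sub
        exact ContinuousOn.rpow_const (by fun_prop)
          (fun x hx => Or.inl (h1pos x hx).ne')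
      · exact hg₁d
      · intro x hx; exact mul_pos (pow_pos hε 2) (Real.exp_pos _)
      · intro x hx
        have hxI : x ∈ Icc (0:ℝ) u := Ioo_subset_Icc_self hx
        have hxD : x ∈ D := hIccD (hIccu hxI)
        have hFx : 0 ≤ F x := (hEF x (hIccu hxI)).2
        have h1x : (0:ℝ) < 1 + x := h1pos x hxI
        have hjb := jb_pos x
        have h1 := hFineq x hxD.1 hxD.2
        have hsE := hsqrtE x (hboot x hxI)
        have h2 : C₁ * jb x ^ (-(3:ℝ) / 2) * Real.sqrt (E x) * F x ≤
            C₁ * jb x ^ (-(3:ℝ) / 2) * (2 * M * jb x ^ (γ / 2)) * F x := by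
          have hc : (0:ℝ) ≤ C₁ * jb x ^ (-(3:ℝ) / 2) := by positivity
          have := mul_le_mul_of_nonneg_right
            (mul_le_mul_of_nonneg_left hsE hc) hFx
          linarith [this]
        have h3 : C₁ * jb x ^ (-(3:ℝ) / 2) * (2 * M * jb x ^ (γ / 2)) * F x ≤
            k₁ x * F x := by
          have hq0 : (0:ℝ) ≤ (3 - γ) / 2 := by linarith
          have hq2 : (3 - γ) / 2 ≤ 2 := by linarith
          have hcomb : jb x ^ (-(3:ℝ) / 2) * jb x ^ (γ / 2) = jb x ^ (-((3 - γ) / 2)) := by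
            rw [← Real.rpow_add hjb]; ring_nf
          have hjle : jb x ^ (-((3 - γ) / 2)) ≤ 2 * (1 + x) ^ (-((3 - γ) / 2)) :=
            jb_rpow_neg_le hq0 hq2 hxI.1
          have hexp : -((3 - γ) / 2) = -β - 1 := by simp only [hβdef]; ring
          rw [hexp] at hjle
          have hrw : C₁ * jb x ^ (-(3:ℝ) / 2) * (2 * M * jb x ^ (γ / 2)) =
              2 * C₁ * M * (jb x ^ (-(3:ℝ) / 2) * jb x ^ (γ / 2)) := by ring
          rw [hrw, hcomb, hexp]
          simp only [hk₁def]
          have hkey : 2 * C₁ * M * jb x ^ (-β - 1) ≤ 4 * C₁ * M * (1 + x) ^ (-β - 1) := by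
            linarith [mul_le_mul_of_nonneg_left hjle (by positivity : (0:ℝ) ≤ 2 * C₁ * M)]
          exact mul_le_mul_of_nonneg_right hkey hFx
        exact h1.trans (h2.trans h3)
      · simp only [hg₁def]
        norm_num
        exact hF0
    have hFbd : ∀ s ∈ Icc (0:ℝ) u, F s ≤ ε ^ 2 * Real.exp c₁ := by
      intro s hs
      refine (hFle s hs).trans ?_
      simp only [hg₁def]
      have h1 : (0:ℝ) ≤ (1 + s) ^ (-β) := Real.rpow_nonneg (h1pos s hs).le _
      have h2 : c₁ * (1 - (1 + s) ^ (-β)) ≤ c₁ := by nlinarith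
      exact mul_le_mul_of_nonneg_left (Real.exp_le_exp.mpr h2) (by positivity)
    have hEle : ∀ s ∈ Icc (0:ℝ) u, E s ≤ g₂ s := by
      apply gron 0 u E E' g₂ k₂ (hEcont.mono hIccu) (fun x hx => hEderiv x (hIoou hx))
      · apply continuousOn_const.mul
        exact ContinuousOn.rpow_const (by fun_prop)
          (fun x hx => Or.inl (h1pos x hx).ne')
      · exact hg₂d
      · intro x hx
        have := h1pos x hx
        simp only [hg₂def]
        positivity
      · intro x hx
        have hxI : x ∈ Icc (0:ℝ) u := Ioo_subset_Icc_self hx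
        have hxD : x ∈ D := hIccD (hIccu hxI)
        have hEx : 0 ≤ E x := (hEF x (hIccu hxI)).1
        have h1x : (0:ℝ) < 1 + x := h1pos x hxI
        have hjb := jb_pos x
        have h1 := hEineq x hxD.1 hxD.2
        have hsF : Real.sqrt (F x) ≤ ε * Real.exp (5 * C₁ * M) := by
          have hF1 : F x ≤ ε ^ 2 * Real.exp c₁ := hFbd x hxI
          have h4 : ε ^ 2 * Real.exp c₁ = (ε * Real.exp (c₁ / 2)) ^ 2 := by
            rw [mul_pow, sq (Real.exp (c₁ / 2)), ← Real.exp_add]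
            ring_nf
          calc Real.sqrt (F x) ≤ Real.sqrt ((ε * Real.exp (c₁ / 2)) ^ 2) :=
                Real.sqrt_le_sqrt (h4 ▸ hF1)
          _ = ε * Real.exp (c₁ / 2) := Real.sqrt_sq (by positivity)
          _ ≤ ε * Real.exp (5 * C₁ * M) := by
              apply mul_le_mul_of_nonneg_left (Real.exp_le_exp.mpr (by linarith)) hε.le
        have hjinv : (jb x)⁻¹ ≤ 2 * (1 + x)⁻¹ := by
          have := jb_rpow_neg_le (q := 1) (by norm_num) (by norm_num) hxI.1
          rwa [Real.rpow_neg_one, Real.rpow_neg_one] at this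
        have hsmall : 2 * C₁ * ε * Real.exp (5 * C₁ * M) ≤ γ := by
          have h5 : ε ≤ γ / (2 * C₁ * Real.exp (5 * C₁ * M)) :=
            hεε₀.trans (min_le_right _ _)
          rw [le_div_iff₀ (by positivity)] at h5
          linarith
        calc E' x ≤ C₁ * (jb x)⁻¹ * E x * Real.sqrt (F x) := h1
        _ ≤ C₁ * (2 * (1 + x)⁻¹) * E x * (ε * Real.exp (5 * C₁ * M)) := by
            apply mul_le_mul _ hsF (Real.sqrt_nonneg _) (by positivity)
            exact mul_le_mul_of_nonneg_right
              (mul_le_mul_of_nonneg_left hjinv hC₁0.le) hEx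
        _ = (2 * C₁ * ε * Real.exp (5 * C₁ * M)) * ((1 + x)⁻¹ * E x) := by ring
        _ ≤ γ * ((1 + x)⁻¹ * E x) :=
            mul_le_mul_of_nonneg_right hsmall (by positivity)
        _ = k₂ x * E x := by
            simp only [hk₂def]
            rw [div_eq_mul_inv]
            ring
      · simp only [hg₂def]
        norm_num
        exact hE0
    intro s hs
    refine ⟨hFbd s hs, ?_⟩
    have h6 : (1 + s) ^ γ ≤ 2 * jb s ^ γ :=
      add_rpow_le_two_mul γ hγ0.le (by linarith) hs.1
    calc E s ≤ g₂ s := hEle s hs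
    _ = M ^ 2 * (1 + s) ^ γ := rfl
    _ ≤ M ^ 2 * (2 * jb s ^ γ) := mul_le_mul_of_nonneg_left h6 (by positivity)
    _ = 2 * M ^ 2 * jb s ^ γ := by ring
  -- the continuity / bootstrap argument
  have key : ∀ s ∈ Icc (0:ℝ) t, E s ≤ 4 * M ^ 2 * jb s ^ γ := by
    by_contra hcon
    push_neg at hcon
    obtain ⟨s₀, hs₀, hs₀'⟩ := hcon
    set B : Set ℝ := {s | s ∈ Icc (0:ℝ) t ∧ 4 * M ^ 2 * jb s ^ γ < E s} with hBdef
    have hBne : B.Nonempty := ⟨s₀, hs₀, hs₀'⟩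
    have hBbdd : BddBelow B := ⟨0, fun b hb => hb.1.1⟩
    set u : ℝ := sInf B with hudef
    have hu0 : 0 ≤ u := le_csInf hBne fun b hb => hb.1.1
    have hub : ∀ b ∈ B, u ≤ b := fun b hb => csInf_le hBbdd hb
    have hut : u ≤ t := (hub s₀ ⟨hs₀, hs₀'⟩).trans hs₀.2
    have huIcc : u ∈ Icc (0:ℝ) t := ⟨hu0, hut⟩
    have hcont4 : ContinuousOn (fun s => E s - 4 * M ^ 2 * jb s ^ γ) (Icc 0 t) :=
      hEcont.sub ((continuous_const.mul (jb_rpow_continuous γ)).continuousOn)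
    have hbelow : ∀ s ∈ Ico (0:ℝ) u, E s ≤ 4 * M ^ 2 * jb s ^ γ := by
      intro s hs
      by_contra h
      push_neg at h
      exact absurd (hub s ⟨⟨hs.1, hs.2.le.trans hut⟩, h⟩) (not_le.mpr hs.2)
    have hatu : E u ≤ 4 * M ^ 2 * jb u ^ γ := by
      rcases eq_or_lt_of_le hu0 with h0u | h0u
      · rw [← h0u, jb_zero, Real.one_rpow]
        nlinarith
      · have hclos : u ∈ closure (Ico (0:ℝ) u) := by
          rw [closure_Ico h0u.ne]
          exact ⟨hu0, le_rfl⟩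
        have hne : (𝓝[Ico (0:ℝ) u] u).NeBot := mem_closure_iff_nhdsWithin_neBot.mp hclos
        have hsub : Ico (0:ℝ) u ⊆ Icc 0 t := fun s hs => ⟨hs.1, hs.2.le.trans hut⟩
        have hd : Tendsto (fun s => E s - 4 * M ^ 2 * jb s ^ γ) (𝓝[Ico (0:ℝ) u] u)
            (𝓝 (E u - 4 * M ^ 2 * jb u ^ γ)) :=
          ((hcont4 u huIcc).mono hsub).tendsto
        have hlim := le_of_tendsto hd (eventually_mem_nhdsWithin.mono
          (fun s hs => sub_nonpos.mpr (hbelow s hs)))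
        linarith
    have hbound4 : ∀ s ∈ Icc (0:ℝ) u, E s ≤ 4 * M ^ 2 * jb s ^ γ := by
      intro s hs
      rcases eq_or_lt_of_le hs.2 with h | h
      · rw [h]; exact hatu
      · exact hbelow s ⟨hs.1, h⟩
    have himp := (improve u huIcc hbound4 u ⟨hu0, le_rfl⟩).2
    have hjbγ : 0 < jb u ^ γ := Real.rpow_pos_of_pos (jb_pos u) γ
    have hdu : E u - 4 * M ^ 2 * jb u ^ γ < 0 := by
      nlinarith [mul_pos (pow_pos hM 2) hjbγ]
    have hev : (fun s => E s - 4 * M ^ 2 * jb s ^ γ) ⁻¹' (Iio 0) ∈ 𝓝[Icc (0:ℝ) t] u :=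
      (hcont4 u huIcc) (Iio_mem_nhds hdu)
    rw [Metric.mem_nhdsWithin_iff] at hev
    obtain ⟨δ, hδ, hball⟩ := hev
    have hlb : ∀ b ∈ B, u + δ ≤ b := by
      intro b hb
      have hbu : u ≤ b := hub b hb
      by_contra h
      push_neg at h
      have hmem : b ∈ Metric.ball u δ ∩ Icc (0:ℝ) t := by
        refine ⟨?_, hb.1⟩
        rw [Metric.mem_ball, Real.dist_eq, abs_of_nonneg (by linarith)]
        linarith
      have := hball hmem
      simp only [mem_preimage, mem_Iio] at this
      linarith [hb.2]
    have : u + δ ≤ u := le_csInf hBne hlb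
    linarith
  have hfin := improve t ⟨ht0, le_rfl⟩ key t ⟨ht0, le_rfl⟩
  have hjbγ : 0 < jb t ^ γ := Real.rpow_pos_of_pos (jb_pos t) γ
  constructor
  · have : 2 * M ^ 2 * jb t ^ γ ≤ C₀ * M ^ 2 * jb t ^ γ := by
      have h2C : (2:ℝ) ≤ C₀ := by simp only [hC₀def]; linarith
      nlinarith [mul_nonneg (by linarith : (0:ℝ) ≤ C₀ - 2) (mul_pos (pow_pos hM 2) hjbγ).le]
    linarith [hfin.2]
  · have hexple : Real.exp c₁ ≤ Real.exp (C₀ * M) := by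
      apply Real.exp_le_exp.mpr
      simp only [hC₀def]
      linarith
    have h1C : (1:ℝ) ≤ C₀ := by simp only [hC₀def]; linarith
    calc F t ≤ ε ^ 2 * Real.exp c₁ := hfin.1
    _ ≤ ε ^ 2 * Real.exp (C₀ * M) := mul_le_mul_of_nonneg_left hexple (by positivity)
    _ ≤ C₀ * ε ^ 2 * Real.exp (C₀ * M) := by
        have h1C : (1:ℝ) ≤ C₀ := by simp only [hC₀def]; linarith
        nlinarith [mul_nonneg (mul_nonneg (by linarith : (0:ℝ) ≤ C₀ - 1) (sq_nonneg ε))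
          (Real.exp_pos (C₀ * M)).le]

end
end
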